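/- arXiv:2101.10007 — 4 statements merged into one kernel-verified Lean document; each statement's English description precedes it below -/
import Mathlib

section
/- Let g be a random vector in ℝⁿ with mean E[g] = ∇J(w) and covariance matrix G, let ε > 0, and set ρ = max over the eigenvalues λ of E[xxᵀ] of (1 - ελ)². Then E[J(w - εg)] ≤ J(w*) + ρ (w - w*)ᵀ Σ_x (w - w*) + ε² Tr(Σ_x G); equivalently, E[J(w - εg)] - J(w*) ≤ ρ (J(w) - J(w*)) + ε² Tr(Σ_x G). -/
open MeasureTheory Matrix

lemma aux_spec {n : ℕ} [NeZero n] (A : Matrix (Fin n) (Fin n) ℝ) (hA : A.PosSemidef)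
    (hherm : A.IsHermitian) (ε ρ : ℝ)
    (hρ : ∀ i, (1 - ε * hherm.eigenvalues i) ^ 2 ≤ ρ) (v : Fin n → ℝ) :
    (v - ε • (A *ᵥ v)) ⬝ᵥ (A *ᵥ (v - ε • (A *ᵥ v))) ≤ ρ * (v ⬝ᵥ (A *ᵥ v)) := by
  classical
  set U : Matrix (Fin n) (Fin n) ℝ := (hherm.eigenvectorUnitary : Matrix (Fin n) (Fin n) ℝ) with hU
  set lam : Fin n → ℝ := hherm.eigenvalues with hlam
  set D : Matrix (Fin n) (Fin n) ℝ := Matrix.diagonal lam with hD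
  have hspec : A = U * D * Uᴴ := by
    have := hherm.spectral_theorem
    simpa [hU, hD, hlam, RCLike.ofReal_real_eq_id, Matrix.star_eq_conjTranspose] using this
  have hUU : Uᴴ * U = 1 := by
    simpa [hU, Matrix.star_eq_conjTranspose] using
      (Matrix.mem_unitaryGroup_iff').mp (hherm.eigenvectorUnitary).2
  have hUU' : U * Uᴴ = 1 := by
    simpa [hU, Matrix.star_eq_conjTranspose] using
      (Matrix.mem_unitaryGroup_iff).mp (hherm.eigenvectorUnitary).2
  set B : Matrix (Fin n) (Fin n) ℝ := 1 - ε • A with hBdef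
  set B' : Matrix (Fin n) (Fin n) ℝ := Matrix.diagonal (fun i => 1 - ε * lam i) with hB'def
  have hB'eq : B' = 1 - ε • D := by
    rw [hB'def, hD, ← Matrix.diagonal_smul, ← Matrix.diagonal_one, ← Matrix.diagonal_sub]
    rfl
  have hB : B = U * B' * Uᴴ := by
    rw [hB'eq, Matrix.mul_sub, Matrix.sub_mul, mul_one, Matrix.mul_smul, Matrix.smul_mul, hUU',
      hBdef, hspec]
  have hcancel : ∀ X : Matrix (Fin n) (Fin n) ℝ, Uᴴ * (U * X) = X := fun X => by
    rw [← Matrix.mul_assoc, hUU, Matrix.one_mul]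
  have hBAB : B * A * B = U * (B' * D * B') * Uᴴ := by
    rw [hB, hspec]
    simp only [Matrix.mul_assoc, hcancel]
  have hdiag : B' * D * B' = Matrix.diagonal (fun i => lam i * (1 - ε * lam i) ^ 2) := by
    rw [hB'def, hD, Matrix.diagonal_mul_diagonal, Matrix.diagonal_mul_diagonal]
    first
    | rfl
    | exact congrArg Matrix.diagonal (funext fun i => by ring)
    | exact congrArg Matrix.diagonal (funext fun i => by dsimp only [Pi.mul_apply]; ring)
  have hMps : (ρ • A - B * A * B).PosSemidef := by
    have h1 : ρ • A = U * (ρ • D) * Uᴴ := by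
      rw [hspec, Matrix.mul_smul, Matrix.smul_mul]
    rw [h1, hBAB, ← Matrix.sub_mul, ← Matrix.mul_sub]
    apply Matrix.PosSemidef.mul_mul_conjTranspose_same
    have h2 : ρ • D - B' * D * B' =
        Matrix.diagonal (fun i => ρ * lam i - lam i * (1 - ε * lam i) ^ 2) := by
      rw [hdiag, hD, ← Matrix.diagonal_smul, ← Matrix.diagonal_sub]
      first
      | rfl
      | exact congrArg Matrix.diagonal (funext fun i => by ring)
      | exact congrArg Matrix.diagonal (funext fun i => by
          dsimp only [Pi.sub_apply, Pi.smul_apply]; ring)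
    rw [h2]
    refine Matrix.PosSemidef.diagonal ?_
    intro i
    simp only [Pi.zero_apply]
    have h3 : (0:ℝ) ≤ lam i := hA.eigenvalues_nonneg i
    have h4 := hρ i
    nlinarith
  have h0 : 0 ≤ v ⬝ᵥ ((ρ • A - B * A * B) *ᵥ v) := by
    have := hMps.dotProduct_mulVec_nonneg v
    simpa using this
  have hBsym : Bᵀ = B := by
    rw [hBdef]
    have : Aᵀ = A := by
      rw [← Matrix.conjTranspose_eq_transpose_of_trivial, hherm.eq]
    simp [Matrix.transpose_sub, Matrix.transpose_smul, this]
  have hu : B *ᵥ v = v - ε • (A *ᵥ v) := by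
    rw [hBdef, Matrix.sub_mulVec, Matrix.one_mulVec, Matrix.smul_mulVec]
  have hsplit : v ⬝ᵥ ((B * A * B) *ᵥ v) = (B *ᵥ v) ⬝ᵥ (A *ᵥ (B *ᵥ v)) := by
    rw [← Matrix.mulVec_mulVec, ← Matrix.mulVec_mulVec, Matrix.dotProduct_mulVec v B,
      ← Matrix.mulVec_transpose, hBsym, Matrix.mulVec_mulVec]
  have hsc : v ⬝ᵥ ((ρ • A) *ᵥ v) = ρ * (v ⬝ᵥ (A *ᵥ v)) := by
    rw [Matrix.smul_mulVec, dotProduct_smul, smul_eq_mul]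
  rw [Matrix.sub_mulVec, dotProduct_sub, hsplit, hsc, hu] at h0
  linarith

theorem stmt5 {n : ℕ} [NeZero n] (μ : Measure ((Fin n → ℝ) × ℝ)) [IsProbabilityMeasure μ]
    (hxx : ∀ i j : Fin n, Integrable (fun p => p.1 i * p.1 j) μ)
    (hxy : ∀ i : Fin n, Integrable (fun p => p.1 i * p.2) μ)
    (hyy : Integrable (fun p => p.2 ^ 2) μ)
    (J : (Fin n → ℝ) → ℝ)
    (hJ : ∀ w : Fin n → ℝ, J w = (1 / 2) * ∫ p, (p.2 - p.1 ⬝ᵥ w) ^ 2 ∂μ)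
    (Exx : Matrix (Fin n) (Fin n) ℝ)
    (hExx : ∀ i j, Exx i j = ∫ p, p.1 i * p.1 j ∂μ)
    (Exy : Fin n → ℝ)
    (hExy : ∀ i, Exy i = ∫ p, p.1 i * p.2 ∂μ)
    (Sx : Matrix (Fin n) (Fin n) ℝ) (hSx : Sx = (1 / 2 : ℝ) • Exx)
    (wstar : Fin n → ℝ) (hws : Exx *ᵥ wstar = Exy)
    {Ω : Type*} [MeasurableSpace Ω] (P : Measure Ω) [IsProbabilityMeasure P]
    (g : Ω → Fin n → ℝ)
    (hgi : ∀ i, Integrable (fun ω => g ω i) P)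
    (hgij : ∀ i j, Integrable (fun ω => g ω i * g ω j) P)
    (w : Fin n → ℝ) (ε : ℝ) (hε : 0 < ε)
    (hmean : ∀ i, ∫ ω, g ω i ∂P = (Exx *ᵥ w - Exy) i)
    (G : Matrix (Fin n) (Fin n) ℝ)
    (hG : ∀ i j, G i j =
      ∫ ω, (g ω i - (Exx *ᵥ w - Exy) i) * (g ω j - (Exx *ᵥ w - Exy) j) ∂P)
    (hherm : Exx.IsHermitian)
    (ρ : ℝ)
    (hρ : ρ = Finset.univ.sup' Finset.univ_nonempty
      fun i => (1 - ε * hherm.eigenvalues i) ^ 2) :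
    (∫ ω, J (w - ε • g ω) ∂P
      ≤ J wstar + ρ * ((w - wstar) ⬝ᵥ (Sx *ᵥ (w - wstar))) + ε ^ 2 * (Sx * G).trace)
    ∧ (∫ ω, J (w - ε • g ω) ∂P) - J wstar
      ≤ ρ * (J w - J wstar) + ε ^ 2 * (Sx * G).trace := by
  classical
  -- notation
  set v : Fin n → ℝ := w - wstar with hv
  set m : Fin n → ℝ := Exx *ᵥ w - Exy with hm
  -- integrability over μ
  have hIdot : ∀ u : Fin n → ℝ, Integrable (fun p : (Fin n → ℝ) × ℝ => (p.1 ⬝ᵥ u) * p.2) μ := by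
    intro u
    have he : (fun p : (Fin n → ℝ) × ℝ => (p.1 ⬝ᵥ u) * p.2)
        = fun p => ∑ i, u i * (p.1 i * p.2) := by
      funext p
      rw [dotProduct, Finset.sum_mul]
      exact Finset.sum_congr rfl fun i _ => by ring
    rw [he]
    exact integrable_finset_sum _ fun i _ => (hxy i).const_mul (u i)
  have hIdot2 : ∀ u u' : Fin n → ℝ,
      Integrable (fun p : (Fin n → ℝ) × ℝ => (p.1 ⬝ᵥ u) * (p.1 ⬝ᵥ u')) μ := by
    intro u u'
    have he : (fun p : (Fin n → ℝ) × ℝ => (p.1 ⬝ᵥ u) * (p.1 ⬝ᵥ u'))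
        = fun p => ∑ i, ∑ j, (u i * u' j) * (p.1 i * p.1 j) := by
      funext p
      rw [dotProduct, dotProduct, Finset.sum_mul_sum]
      exact Finset.sum_congr rfl fun i _ => Finset.sum_congr rfl fun j _ => by ring
    rw [he]
    exact integrable_finset_sum _ fun i _ =>
      integrable_finset_sum _ fun j _ => (hxx i j).const_mul _
  -- moments over μ
  have hEdot : ∀ u : Fin n → ℝ, ∫ p, (p.1 ⬝ᵥ u) * p.2 ∂μ = u ⬝ᵥ Exy := by
    intro u
    have he : (fun p : (Fin n → ℝ) × ℝ => (p.1 ⬝ᵥ u) * p.2)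
        = fun p => ∑ i, u i * (p.1 i * p.2) := by
      funext p
      rw [dotProduct, Finset.sum_mul]
      exact Finset.sum_congr rfl fun i _ => by ring
    rw [he, integral_finset_sum _ fun i _ => (hxy i).const_mul (u i)]
    rw [dotProduct]
    exact Finset.sum_congr rfl fun i _ => by rw [integral_const_mul, hExy]
  have hEdot2 : ∀ u u' : Fin n → ℝ,
      ∫ p, (p.1 ⬝ᵥ u) * (p.1 ⬝ᵥ u') ∂μ = u ⬝ᵥ (Exx *ᵥ u') := by
    intro u u'
    have he : (fun p : (Fin n → ℝ) × ℝ => (p.1 ⬝ᵥ u) * (p.1 ⬝ᵥ u'))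
        = fun p => ∑ i, ∑ j, (u i * u' j) * (p.1 i * p.1 j) := by
      funext p
      rw [dotProduct, dotProduct, Finset.sum_mul_sum]
      exact Finset.sum_congr rfl fun i _ => Finset.sum_congr rfl fun j _ => by ring
    rw [he, integral_finset_sum _ fun i _ =>
      (integrable_finset_sum _ fun j _ => (hxx i j).const_mul _)]
    rw [dotProduct]
    refine Finset.sum_congr rfl fun i _ => ?_
    rw [integral_finset_sum _ fun j _ => (hxx i j).const_mul _, mulVec, dotProduct,
      Finset.mul_sum]
    refine Finset.sum_congr rfl fun j _ => ?_
    rw [integral_const_mul, hExx]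
    ring
  -- quadratic form of J
  have hJq : ∀ u : Fin n → ℝ,
      J u = (1 / 2) * ((∫ p, p.2 ^ 2 ∂μ) - 2 * (u ⬝ᵥ Exy) + u ⬝ᵥ (Exx *ᵥ u)) := by
    intro u
    rw [hJ u]
    congr 1
    have he : (fun p : (Fin n → ℝ) × ℝ => (p.2 - p.1 ⬝ᵥ u) ^ 2)
        = fun p => (p.2 ^ 2 - 2 * ((p.1 ⬝ᵥ u) * p.2)) + (p.1 ⬝ᵥ u) * (p.1 ⬝ᵥ u) := by
      funext p; ring
    have hI3 : Integrable (fun p : (Fin n → ℝ) × ℝ =>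
        p.2 ^ 2 - 2 * ((p.1 ⬝ᵥ u) * p.2)) μ := hyy.sub ((hIdot u).const_mul 2)
    rw [he, integral_add hI3 (hIdot2 u u),
      integral_sub hyy ((hIdot u).const_mul 2), integral_const_mul, hEdot, hEdot2]
  have hsym' : ∀ i j, Exx i j = Exx j i := by
    intro i j
    rw [hExx, hExx]
    congr 1
    funext p
    ring
  have hsymm : ∀ a b : Fin n → ℝ, a ⬝ᵥ (Exx *ᵥ b) = b ⬝ᵥ (Exx *ᵥ a) := by
    intro a b
    simp only [dotProduct, mulVec, Finset.mul_sum]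
    rw [Finset.sum_comm]
    exact Finset.sum_congr rfl fun i _ => Finset.sum_congr rfl fun j _ => by
      rw [hsym' j i]; ring
  have key : ∀ u : Fin n → ℝ,
      J u - J wstar = (1 / 2) * ((u - wstar) ⬝ᵥ (Exx *ᵥ (u - wstar))) := by
    intro u
    rw [hJq u, hJq wstar]
    simp only [sub_dotProduct, mulVec_sub, dotProduct_sub]
    have h1 : u ⬝ᵥ Exy = u ⬝ᵥ (Exx *ᵥ wstar) := by rw [hws]
    have h2 : wstar ⬝ᵥ Exy = wstar ⬝ᵥ (Exx *ᵥ wstar) := by rw [hws]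
    have h3 : wstar ⬝ᵥ (Exx *ᵥ u) = u ⬝ᵥ (Exx *ᵥ wstar) := hsymm _ _
    linarith
  -- Ω-side computations
  have hmean' : ∀ i, ∫ ω, g ω i ∂P = m i := hmean
  have hGint : ∀ i j, ∫ ω, g ω i * g ω j ∂P = G i j + m i * m j := by
    intro i j
    rw [hG i j]
    have he : (fun ω => (g ω i - m i) * (g ω j - m j))
        = fun ω => ((g ω i * g ω j - m j * g ω i) - m i * g ω j) + m i * m j := by
      funext ω; ring
    have hI1 : Integrable (fun ω => g ω i * g ω j - m j * g ω i) P :=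
      (hgij i j).sub ((hgi i).const_mul _)
    have hI2 : Integrable (fun ω => (g ω i * g ω j - m j * g ω i) - m i * g ω j) P :=
      hI1.sub ((hgi j).const_mul _)
    rw [he, integral_add hI2 (integrable_const _),
      integral_sub hI1 ((hgi j).const_mul _),
      integral_sub (hgij i j) ((hgi i).const_mul _),
      integral_const_mul, integral_const_mul, hmean' i, hmean' j, integral_const]
    simp
    ring
  have hGsym : ∀ i j, G i j = G j i := by
    intro i j
    rw [hG i j, hG j i]
    congr 1
    funext ω
    ring
  -- quadratic forms as double sums
  have hquad : ∀ x : Fin n → ℝ, x ⬝ᵥ (Exx *ᵥ x) = ∑ i, ∑ j, Exx i j * (x i * x j) := by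
    intro x
    simp only [dotProduct, mulVec, Finset.mul_sum]
    exact Finset.sum_congr rfl fun i _ => Finset.sum_congr rfl fun j _ => by ring
  -- pointwise expansion of J (w - ε • g ω)
  have hq : ∀ ω, J (w - ε • g ω) = J wstar
      + (1 / 2) * ∑ i, ∑ j, Exx i j * ((v i - ε * g ω i) * (v j - ε * g ω j)) := by
    intro ω
    have hk := key (w - ε • g ω)
    have huv : w - ε • g ω - wstar = fun i => v i - ε * g ω i := by
      funext i
      simp only [hv, Pi.sub_apply, Pi.smul_apply, smul_eq_mul]
      ring
    rw [huv] at hk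
    rw [hquad] at hk
    linarith
  -- integrability over Ω of each term
  have hterm_int : ∀ i j : Fin n,
      Integrable (fun ω => (v i - ε * g ω i) * (v j - ε * g ω j)) P := by
    intro i j
    have he : (fun ω => (v i - ε * g ω i) * (v j - ε * g ω j))
        = fun ω => ((v i * v j - (ε * v i) * g ω j) - (ε * v j) * g ω i)
            + (ε * ε) * (g ω i * g ω j) := by
      funext ω; ring
    rw [he]
    have hI1 : Integrable (fun ω => v i * v j - (ε * v i) * g ω j) P :=
      (integrable_const _).sub ((hgi j).const_mul _)
    have hI2 : Integrable (fun ω => (v i * v j - (ε * v i) * g ω j) - (ε * v j) * g ω i) P :=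
      hI1.sub ((hgi i).const_mul _)
    exact hI2.add ((hgij i j).const_mul _)
  have hterm : ∀ i j : Fin n, ∫ ω, (v i - ε * g ω i) * (v j - ε * g ω j) ∂P
      = (v i - ε * m i) * (v j - ε * m j) + ε ^ 2 * G i j := by
    intro i j
    have he : (fun ω => (v i - ε * g ω i) * (v j - ε * g ω j))
        = fun ω => ((v i * v j - (ε * v i) * g ω j) - (ε * v j) * g ω i)
            + (ε * ε) * (g ω i * g ω j) := by
      funext ω; ring
    have hI1 : Integrable (fun ω => v i * v j - (ε * v i) * g ω j) P :=
      (integrable_const _).sub ((hgi j).const_mul _)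
    have hI2 : Integrable (fun ω => (v i * v j - (ε * v i) * g ω j) - (ε * v j) * g ω i) P :=
      hI1.sub ((hgi i).const_mul _)
    rw [he, integral_add hI2 ((hgij i j).const_mul _),
      integral_sub hI1 ((hgi i).const_mul _),
      integral_sub (integrable_const _) ((hgi j).const_mul _),
      integral_const_mul, integral_const_mul, integral_const_mul,
      hmean' i, hmean' j, integral_const_mul, hGint i j]
    rw [integral_const]
    simp only [probReal_univ, one_smul]
    ring
  have hintsum : Integrable (fun ω =>
      ∑ i, ∑ j, Exx i j * ((v i - ε * g ω i) * (v j - ε * g ω j))) P :=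
    integrable_finset_sum _ fun i _ => integrable_finset_sum _ fun j _ =>
      (hterm_int i j).const_mul _
  -- the main integral identity
  have hT : ∫ ω, J (w - ε • g ω) ∂P
      = J wstar + (1 / 2) * ((v - ε • m) ⬝ᵥ (Exx *ᵥ (v - ε • m)))
        + ε ^ 2 * ((1 / 2) * ∑ i, ∑ j, Exx i j * G i j) := by
    have he : (fun ω => J (w - ε • g ω)) = fun ω => J wstar
        + (1 / 2) * ∑ i, ∑ j, Exx i j * ((v i - ε * g ω i) * (v j - ε * g ω j)) := by
      funext ω; exact hq ω
    rw [he, integral_add (integrable_const _) (hintsum.const_mul _), integral_const,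
      integral_const_mul, integral_finset_sum Finset.univ fun i _ =>
        (integrable_finset_sum Finset.univ fun j _ => (hterm_int i j).const_mul (Exx i j))]
    have hsum : ∀ i : Fin n, ∫ ω, ∑ j, Exx i j * ((v i - ε * g ω i) * (v j - ε * g ω j)) ∂P
        = ∑ j, Exx i j * ((v i - ε * m i) * (v j - ε * m j) + ε ^ 2 * G i j) := by
      intro i
      rw [integral_finset_sum _ fun j _ => (hterm_int i j).const_mul _]
      exact Finset.sum_congr rfl fun j _ => by rw [integral_const_mul, hterm i j]
    rw [Finset.sum_congr rfl fun i _ => hsum i]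
    have hqm : (v - ε • m) ⬝ᵥ (Exx *ᵥ (v - ε • m))
        = ∑ i, ∑ j, Exx i j * ((v i - ε * m i) * (v j - ε * m j)) := by
      rw [hquad]
      exact Finset.sum_congr rfl fun i _ => Finset.sum_congr rfl fun j _ => by
        simp only [Pi.sub_apply, Pi.smul_apply, smul_eq_mul]
    rw [hqm]
    have hgoalsum : ∑ i, ∑ j, Exx i j * ((v i - ε * m i) * (v j - ε * m j) + ε ^ 2 * G i j)
        = (∑ i, ∑ j, Exx i j * ((v i - ε * m i) * (v j - ε * m j)))
          + ε ^ 2 * ∑ i, ∑ j, Exx i j * G i j := by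
      rw [Finset.mul_sum, ← Finset.sum_add_distrib]
      refine Finset.sum_congr rfl fun i _ => ?_
      rw [Finset.mul_sum, ← Finset.sum_add_distrib]
      exact Finset.sum_congr rfl fun j _ => by ring
    rw [hgoalsum]
    simp only [probReal_univ, smul_eq_mul, one_mul]
    ring
  -- trace identity
  have htrace : (Sx * G).trace = (1 / 2) * ∑ i, ∑ j, Exx i j * G i j := by
    rw [hSx, Matrix.trace]
    simp only [Matrix.diag_apply, Matrix.mul_apply, Matrix.smul_apply, smul_eq_mul]
    rw [Finset.mul_sum]
    refine Finset.sum_congr rfl fun i _ => ?_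
    rw [Finset.mul_sum]
    refine Finset.sum_congr rfl fun j _ => ?_
    rw [hGsym j i]
    ring
  -- PSD of Exx
  have hpsd : Exx.PosSemidef := by
    refine Matrix.PosSemidef.of_dotProduct_mulVec_nonneg hherm fun x => ?_
    have h1 : x ⬝ᵥ (Exx *ᵥ x) = ∫ p, (p.1 ⬝ᵥ x) * (p.1 ⬝ᵥ x) ∂μ := (hEdot2 x x).symm
    have h2 : (0:ℝ) ≤ ∫ p, (p.1 ⬝ᵥ x) * (p.1 ⬝ᵥ x) ∂μ :=
      integral_nonneg fun p => mul_self_nonneg _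
    simpa [h1] using h2
  -- m = Exx *ᵥ v
  have hmv : m = Exx *ᵥ v := by
    rw [hm, hv, Matrix.mulVec_sub, hws]
  -- eigenvalue bound
  have hρ' : ∀ i, (1 - ε * hherm.eigenvalues i) ^ 2 ≤ ρ := by
    intro i
    rw [hρ]
    exact Finset.le_sup' (fun i => (1 - ε * hherm.eigenvalues i) ^ 2) (Finset.mem_univ i)
  have hC : (v - ε • m) ⬝ᵥ (Exx *ᵥ (v - ε • m)) ≤ ρ * (v ⬝ᵥ (Exx *ᵥ v)) := by
    rw [hmv]
    exact aux_spec Exx hpsd hherm ε ρ hρ' v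
  -- put it together
  have hSv : (w - wstar) ⬝ᵥ (Sx *ᵥ (w - wstar)) = (1 / 2) * (v ⬝ᵥ (Exx *ᵥ v)) := by
    rw [← hv, hSx, Matrix.smul_mulVec, dotProduct_smul, smul_eq_mul]
  have hJw : J w - J wstar = (1 / 2) * (v ⬝ᵥ (Exx *ᵥ v)) := by
    rw [key w, hv]
  constructor
  · rw [hT, hSv, htrace]
    nlinarith [hC]
  · rw [hT, hJw, htrace]
    nlinarith [hC]
end

section
/- Consider the scheduled stochastic gradient iteration in which, at step k, g_k is a random vector with conditional mean ∇J(w_k) and conditional covariance G given w_k, the decision is α_k = 1 if J(w_k - εg_k) - J(w_k) ≤ -λ and α_k = 0 otherwise, and w_{k+1} = w_k - εg_k if α_k = 1 and w_{k+1} = w_k otherwise. Then the conditional expectation satisfies E[J(w_{k+1}) | w_k] ≤ λ + ρ J(w_k) + ε² Tr(Σ_x G) + (1 - ρ) J(w*), where ρ = max over the eigenvalues λ̃ of E[xxᵀ] of (1 - ελ̃)². -/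
open MeasureTheory Matrix

lemma quad_eig {n : ℕ} (A : Matrix (Fin n) (Fin n) ℝ) (hA : A.IsHermitian) (v : Fin n → ℝ) :
    v ⬝ᵥ (A *ᵥ v) = ∑ i, hA.eigenvalues i *
      ((star (hA.eigenvectorUnitary : Matrix (Fin n) (Fin n) ℝ) *ᵥ v) i) ^ 2 := by
  set U := (hA.eigenvectorUnitary : Matrix (Fin n) (Fin n) ℝ) with hU
  set c : Fin n → ℝ := star U *ᵥ v with hc
  have hAv : A *ᵥ v = U *ᵥ ((diagonal (RCLike.ofReal ∘ hA.eigenvalues)) *ᵥ c) := by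
    rw [hc, Matrix.mulVec_mulVec, Matrix.mulVec_mulVec]
    conv_lhs => rw [hA.spectral_theorem]
    rfl
  calc v ⬝ᵥ (A *ᵥ v)
      = c ⬝ᵥ ((diagonal (RCLike.ofReal ∘ hA.eigenvalues)) *ᵥ c) := by
        rw [hAv, Matrix.dotProduct_mulVec, hc]
        congr 1
        rw [Matrix.star_eq_conjTranspose, Matrix.conjTranspose_eq_transpose_of_trivial,
          Matrix.mulVec_transpose]
    _ = ∑ i, hA.eigenvalues i * (c i) ^ 2 := by
        simp [dotProduct, Matrix.mulVec_diagonal]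
        congr 1; funext i; ring

lemma coord_eig {n : ℕ} (A : Matrix (Fin n) (Fin n) ℝ) (hA : A.IsHermitian) (v : Fin n → ℝ) :
    star (hA.eigenvectorUnitary : Matrix (Fin n) (Fin n) ℝ) *ᵥ (A *ᵥ v)
      = fun i => hA.eigenvalues i *
        ((star (hA.eigenvectorUnitary : Matrix (Fin n) (Fin n) ℝ) *ᵥ v) i) := by
  set U := (hA.eigenvectorUnitary : Matrix (Fin n) (Fin n) ℝ) with hU
  set c : Fin n → ℝ := star U *ᵥ v with hc
  have hAv : A *ᵥ v = U *ᵥ ((diagonal (RCLike.ofReal ∘ hA.eigenvalues)) *ᵥ c) := by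
    rw [hc, Matrix.mulVec_mulVec, Matrix.mulVec_mulVec]
    conv_lhs => rw [hA.spectral_theorem]
    rfl
  rw [hAv, Matrix.mulVec_mulVec (diagonal (RCLike.ofReal ∘ hA.eigenvalues) *ᵥ c) (star U) U, hU,
    Unitary.coe_star_mul_self hA.eigenvectorUnitary, Matrix.one_mulVec]
  funext i
  simp [Matrix.mulVec_diagonal]

lemma spec_bound {n : ℕ} (A : Matrix (Fin n) (Fin n) ℝ) (hA : A.IsHermitian)
    (hpsd : ∀ i, 0 ≤ hA.eigenvalues i) (ε ρ : ℝ)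
    (hρ : ∀ i, (1 - ε * hA.eigenvalues i) ^ 2 ≤ ρ) (v : Fin n → ℝ) :
    (v - ε • (A *ᵥ v)) ⬝ᵥ (A *ᵥ (v - ε • (A *ᵥ v))) ≤ ρ * (v ⬝ᵥ (A *ᵥ v)) := by
  set U := (hA.eigenvectorUnitary : Matrix (Fin n) (Fin n) ℝ) with hU
  set c : Fin n → ℝ := star U *ᵥ v with hc
  have h1 := quad_eig A hA (v - ε • (A *ᵥ v))
  have h2 := quad_eig A hA v
  rw [← hU] at h1 h2
  rw [← hc] at h2
  have hcoord : star U *ᵥ (v - ε • (A *ᵥ v)) = fun i => (1 - ε * hA.eigenvalues i) * c i := by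
    rw [Matrix.mulVec_sub, Matrix.mulVec_smul, coord_eig A hA v]
    funext i
    simp [hc]
    ring
  rw [h1, h2, hcoord, Finset.mul_sum]
  apply Finset.sum_le_sum
  intro i _
  have := hρ i
  have := hpsd i
  dsimp only
  nlinarith [mul_nonneg (sub_nonneg.mpr (hρ i)) (mul_nonneg (hpsd i) (sq_nonneg (c i)))]

lemma quad_expand {n : ℕ} (A : Matrix (Fin n) (Fin n) ℝ) (hA : Aᵀ = A) (b ws w : Fin n → ℝ)
    (hws : A *ᵥ ws = b) :
    (w - ws) ⬝ᵥ (A *ᵥ (w - ws)) = w ⬝ᵥ (A *ᵥ w) - 2 * (b ⬝ᵥ w) + b ⬝ᵥ ws := by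
  have h1 : w ⬝ᵥ (A *ᵥ ws) = b ⬝ᵥ w := by rw [hws]; exact dotProduct_comm _ _
  have h2 : ws ⬝ᵥ (A *ᵥ w) = b ⬝ᵥ w := by
    rw [Matrix.dotProduct_mulVec, ← Matrix.mulVec_transpose, hA, hws]
  have h3 : ws ⬝ᵥ (A *ᵥ ws) = b ⬝ᵥ ws := by rw [hws]; exact dotProduct_comm _ _
  rw [Matrix.mulVec_sub, dotProduct_sub, sub_dotProduct, sub_dotProduct,
    h1, h2, h3]
  ring

lemma J_expand {n : ℕ} (μ : Measure ((Fin n → ℝ) × ℝ)) [IsProbabilityMeasure μ]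
    (hxx : ∀ i j : Fin n, Integrable (fun p => p.1 i * p.1 j) μ)
    (hxy : ∀ i : Fin n, Integrable (fun p => p.1 i * p.2) μ)
    (hyy : Integrable (fun p => p.2 ^ 2) μ)
    (Exx : Matrix (Fin n) (Fin n) ℝ)
    (hExx : ∀ i j, Exx i j = ∫ p, p.1 i * p.1 j ∂μ)
    (Exy : Fin n → ℝ)
    (hExy : ∀ i, Exy i = ∫ p, p.1 i * p.2 ∂μ)
    (w : Fin n → ℝ) :
    ∫ p, (p.2 - p.1 ⬝ᵥ w) ^ 2 ∂μ
      = (∫ p, p.2 ^ 2 ∂μ) - 2 * (Exy ⬝ᵥ w) + w ⬝ᵥ (Exx *ᵥ w) := by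
  have key : ∀ p : (Fin n → ℝ) × ℝ, (p.2 - p.1 ⬝ᵥ w) ^ 2
      = p.2 ^ 2 - (∑ i, (2 * w i) * (p.1 i * p.2))
        + ∑ i, ∑ j, (w i * w j) * (p.1 i * p.1 j) := by
    intro p
    have e1 : (∑ i, (2 * w i) * (p.1 i * p.2)) = 2 * ((p.1 ⬝ᵥ w) * p.2) := by
      rw [dotProduct, Finset.sum_mul, Finset.mul_sum]
      exact Finset.sum_congr rfl fun i _ => by ring
    have e2 : (∑ i, ∑ j, (w i * w j) * (p.1 i * p.1 j)) = (p.1 ⬝ᵥ w) ^ 2 := by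
      rw [sq, dotProduct, Finset.sum_mul_sum]
      exact Finset.sum_congr rfl fun i _ => Finset.sum_congr rfl fun j _ => by ring
    rw [e1, e2]; ring
  have hB : Integrable (fun p : (Fin n → ℝ) × ℝ => ∑ i, (2 * w i) * (p.1 i * p.2)) μ :=
    integrable_finset_sum _ fun i _ => (hxy i).const_mul _
  have hC : Integrable
      (fun p : (Fin n → ℝ) × ℝ => ∑ i, ∑ j, (w i * w j) * (p.1 i * p.1 j)) μ :=
    integrable_finset_sum _ fun i _ => integrable_finset_sum _ fun j _ => (hxx i j).const_mul _
  calc ∫ p, (p.2 - p.1 ⬝ᵥ w) ^ 2 ∂μ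
      = ∫ p, (p.2 ^ 2 - (∑ i, (2 * w i) * (p.1 i * p.2))
          + ∑ i, ∑ j, (w i * w j) * (p.1 i * p.1 j)) ∂μ := by
        exact integral_congr_ae (Filter.Eventually.of_forall key)
    _ = (∫ p, p.2 ^ 2 ∂μ) - (∫ p, ∑ i, (2 * w i) * (p.1 i * p.2) ∂μ)
          + ∫ p, ∑ i, ∑ j, (w i * w j) * (p.1 i * p.1 j) ∂μ := by
        have hBC := integral_add (hyy.sub hB) hC
        simp only [Pi.sub_apply] at hBC
        rw [hBC, integral_sub hyy hB]
    _ = (∫ p, p.2 ^ 2 ∂μ) - 2 * (Exy ⬝ᵥ w) + w ⬝ᵥ (Exx *ᵥ w) := by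
        congr 1
        · congr 1
          rw [integral_finset_sum _ fun i _ => (hxy i).const_mul _]
          rw [dotProduct, Finset.mul_sum]
          exact Finset.sum_congr rfl fun i _ => by rw [integral_const_mul, hExy]; ring
        · rw [integral_finset_sum _ fun i _ => integrable_finset_sum _
            fun j _ => (hxx i j).const_mul _]
          rw [dotProduct]
          refine Finset.sum_congr rfl fun i _ => ?_
          rw [integral_finset_sum _ fun j _ => (hxx i j).const_mul _, Matrix.mulVec,
            dotProduct, Finset.mul_sum]
          exact Finset.sum_congr rfl fun j _ => by rw [integral_const_mul, hExx]; ring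

lemma quad_step {n : ℕ} (A : Matrix (Fin n) (Fin n) ℝ) (hA : Aᵀ = A) (d g : Fin n → ℝ) (ε : ℝ) :
    (d - ε • g) ⬝ᵥ (A *ᵥ (d - ε • g))
      = d ⬝ᵥ (A *ᵥ d) - 2 * ε * ((A *ᵥ d) ⬝ᵥ g) + ε ^ 2 * (g ⬝ᵥ (A *ᵥ g)) := by
  have h1 : d ⬝ᵥ (A *ᵥ (ε • g)) = ε * ((A *ᵥ d) ⬝ᵥ g) := by
    rw [Matrix.mulVec_smul, dotProduct_smul, Matrix.dotProduct_mulVec,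
      ← Matrix.mulVec_transpose, hA]
    simp [smul_eq_mul]
  have h2 : (ε • g) ⬝ᵥ (A *ᵥ d) = ε * ((A *ᵥ d) ⬝ᵥ g) := by
    rw [smul_dotProduct, dotProduct_comm]
    simp [smul_eq_mul]
  have h3 : (ε • g) ⬝ᵥ (A *ᵥ (ε • g)) = ε ^ 2 * (g ⬝ᵥ (A *ᵥ g)) := by
    rw [Matrix.mulVec_smul, smul_dotProduct, dotProduct_smul]
    simp [smul_eq_mul]; ring
  rw [Matrix.mulVec_sub, dotProduct_sub, sub_dotProduct, sub_dotProduct,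
    h1, h2, h3]
  ring

lemma psd_entry_bound {n : ℕ} (A : Matrix (Fin n) (Fin n) ℝ) (hA : Aᵀ = A)
    (hpsd : ∀ x : Fin n → ℝ, 0 ≤ x ⬝ᵥ (A *ᵥ x)) (d : Fin n → ℝ) (i : Fin n) :
    ((A *ᵥ d) i) ^ 2 ≤ A i i * (d ⬝ᵥ (A *ᵥ d)) := by
  have key : ∀ t : ℝ, 0 ≤ A i i * (t * t) + (2 * (A *ᵥ d) i) * t + d ⬝ᵥ (A *ᵥ d) := by
    intro t
    have h := hpsd (d + t • (Pi.single i 1 : Fin n → ℝ))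
    have e1 : (Pi.single i 1 : Fin n → ℝ) ⬝ᵥ (A *ᵥ d) = (A *ᵥ d) i := by
      rw [single_dotProduct]; ring
    have e2 : d ⬝ᵥ (A *ᵥ (Pi.single i 1 : Fin n → ℝ)) = (A *ᵥ d) i := by
      rw [Matrix.dotProduct_mulVec, ← Matrix.mulVec_transpose, hA, dotProduct_single]
      ring
    have e3 : (Pi.single i 1 : Fin n → ℝ) ⬝ᵥ (A *ᵥ (Pi.single i 1 : Fin n → ℝ)) = A i i := by
      rw [Matrix.mulVec_single, single_dotProduct]; simp
    rw [Matrix.mulVec_add, Matrix.mulVec_smul, dotProduct_add, add_dotProduct,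
      add_dotProduct, dotProduct_smul, smul_dotProduct,
      smul_dotProduct, dotProduct_smul, e1, e2, e3] at h
    simp only [smul_eq_mul] at h
    nlinarith [h]
  have hd := discrim_le_zero key
  rw [discrim] at hd
  nlinarith [hd]

lemma dot_exx {n : ℕ} (μ : Measure ((Fin n → ℝ) × ℝ)) [IsProbabilityMeasure μ]
    (hxx : ∀ i j : Fin n, Integrable (fun p => p.1 i * p.1 j) μ)
    (Exx : Matrix (Fin n) (Fin n) ℝ)
    (hExx : ∀ i j, Exx i j = ∫ p, p.1 i * p.1 j ∂μ)
    (x : Fin n → ℝ) : 0 ≤ x ⬝ᵥ (Exx *ᵥ x) := by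
  have key : x ⬝ᵥ (Exx *ᵥ x) = ∫ p, (p.1 ⬝ᵥ x) ^ 2 ∂μ := by
    calc x ⬝ᵥ (Exx *ᵥ x)
        = ∑ i, ∑ j, (x i * x j) * ∫ p, p.1 i * p.1 j ∂μ := by
          simp only [dotProduct, Matrix.mulVec, hExx, Finset.mul_sum]
          exact Finset.sum_congr rfl fun i _ => Finset.sum_congr rfl fun j _ => by ring
      _ = ∫ p, ∑ i, ∑ j, (x i * x j) * (p.1 i * p.1 j) ∂μ := by
          rw [integral_finset_sum _ fun i _ => integrable_finset_sum _
            fun j _ => (hxx i j).const_mul _]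
          refine Finset.sum_congr rfl fun i _ => ?_
          rw [integral_finset_sum _ fun j _ => (hxx i j).const_mul _]
          exact Finset.sum_congr rfl fun j _ => (integral_const_mul _ _).symm
      _ = ∫ p, (p.1 ⬝ᵥ x) ^ 2 ∂μ := by
          refine integral_congr_ae (Filter.Eventually.of_forall fun p => ?_)
          dsimp only
          rw [sq, dotProduct, Finset.sum_mul_sum]
          exact Finset.sum_congr rfl fun i _ => Finset.sum_congr rfl fun j _ => by ring
  rw [key]
  exact integral_nonneg fun p => sq_nonneg _

theorem stmt8 {n : ℕ} [NeZero n] (μ : Measure ((Fin n → ℝ) × ℝ)) [IsProbabilityMeasure μ]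
    (hxx : ∀ i j : Fin n, Integrable (fun p => p.1 i * p.1 j) μ)
    (hxy : ∀ i : Fin n, Integrable (fun p => p.1 i * p.2) μ)
    (hyy : Integrable (fun p => p.2 ^ 2) μ)
    (J : (Fin n → ℝ) → ℝ)
    (hJ : ∀ w : Fin n → ℝ, J w = (1 / 2) * ∫ p, (p.2 - p.1 ⬝ᵥ w) ^ 2 ∂μ)
    (Exx : Matrix (Fin n) (Fin n) ℝ)
    (hExx : ∀ i j, Exx i j = ∫ p, p.1 i * p.1 j ∂μ)
    (Exy : Fin n → ℝ)
    (hExy : ∀ i, Exy i = ∫ p, p.1 i * p.2 ∂μ)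
    (Sx : Matrix (Fin n) (Fin n) ℝ) (hSx : Sx = (1 / 2 : ℝ) • Exx)
    (wstar : Fin n → ℝ) (hws : Exx *ᵥ wstar = Exy)
    {Ω : Type*} [MeasurableSpace Ω] (P : Measure Ω) [IsProbabilityMeasure P]
    (lam ε : ℝ) (hlam : 0 < lam) (hε : 0 < ε)
    (wk gk : Ω → Fin n → ℝ) (hwmeas : Measurable wk)
    (G : Matrix (Fin n) (Fin n) ℝ)
    (hgi : ∀ i, Integrable (fun ω => gk ω i) P)
    (hgij : ∀ i j, Integrable (fun ω => gk ω i * gk ω j) P)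
    (hwgi : ∀ i j, Integrable (fun ω => wk ω i * gk ω j) P)
    (hJw : Integrable (fun ω => J (wk ω)) P)
    (hJwg : Integrable (fun ω => J (wk ω - ε • gk ω)) P)
    (hmean : ∀ i, P[(fun ω => gk ω i) | MeasurableSpace.comap wk inferInstance]
      =ᵐ[P] fun ω => (Exx *ᵥ wk ω - Exy) i)
    (hcov : ∀ i j,
      P[(fun ω => (gk ω i - (Exx *ᵥ wk ω - Exy) i) * (gk ω j - (Exx *ᵥ wk ω - Exy) j)) |
          MeasurableSpace.comap wk inferInstance]
        =ᵐ[P] fun _ => G i j)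
    (wnext : Ω → Fin n → ℝ)
    (hnext : ∀ ω, wnext ω =
      if J (wk ω - ε • gk ω) - J (wk ω) ≤ -lam then wk ω - ε • gk ω else wk ω)
    (hJnext : Integrable (fun ω => J (wnext ω)) P)
    (hherm : Exx.IsHermitian)
    (ρ : ℝ)
    (hρ : ρ = Finset.univ.sup' Finset.univ_nonempty
      fun i => (1 - ε * hherm.eigenvalues i) ^ 2) :
    ∀ᵐ ω ∂P,
      (P[(fun ω' => J (wnext ω')) | MeasurableSpace.comap wk inferInstance]) ω
        ≤ lam + ρ * J (wk ω) + ε ^ 2 * (Sx * G).trace + (1 - ρ) * J wstar := by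
  have hAT : Exxᵀ = Exx := by
    rw [← Matrix.conjTranspose_eq_transpose_of_trivial]; exact hherm
  have hsymm : ∀ i j, Exx i j = Exx j i := fun i j =>
    show Exxᵀ j i = Exx j i from congrFun (congrFun hAT j) i
  have hpsd : ∀ x : Fin n → ℝ, 0 ≤ x ⬝ᵥ (Exx *ᵥ x) := dot_exx μ hxx Exx hExx
  have hPSD : Exx.PosSemidef :=
    Matrix.PosSemidef.of_dotProduct_mulVec_nonneg hherm (fun x => by simpa using hpsd x)
  have heig : ∀ i, 0 ≤ hherm.eigenvalues i := fun i => hPSD.eigenvalues_nonneg i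
  have hρ' : ∀ i, (1 - ε * hherm.eigenvalues i) ^ 2 ≤ ρ := fun i => by
    rw [hρ]
    exact Finset.le_sup' (fun i => (1 - ε * hherm.eigenvalues i) ^ 2) (Finset.mem_univ i)
  have hJe : ∀ w, J w = (1/2) * ((∫ p, p.2 ^ 2 ∂μ) - 2 * (Exy ⬝ᵥ w) + w ⬝ᵥ (Exx *ᵥ w)) :=
    fun w => by rw [hJ w, J_expand μ hxx hxy hyy Exx hExx Exy hExy w]
  have hJq : ∀ w, J w = J wstar + (1/2) * ((w - wstar) ⬝ᵥ (Exx *ᵥ (w - wstar))) := by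
    intro w
    have h3 : wstar ⬝ᵥ (Exx *ᵥ wstar) = Exy ⬝ᵥ wstar := by
      rw [hws]; exact dotProduct_comm _ _
    rw [hJe w, hJe wstar, quad_expand Exx hAT Exy wstar w hws, h3]
    ring
  have hJmeas : Measurable J := by
    have hJfun : J = fun w => (1/2) * ((∫ p, p.2 ^ 2 ∂μ) - 2 * (Exy ⬝ᵥ w) + w ⬝ᵥ (Exx *ᵥ w)) :=
      funext hJe
    rw [hJfun]
    simp only [dotProduct, Matrix.mulVec]
    refine Measurable.const_mul (Measurable.add (Measurable.sub measurable_const ?_) ?_) _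
    · exact (Finset.measurable_sum _ fun i _ => (measurable_pi_apply i).const_mul _).const_mul _
    · exact Finset.measurable_sum _ fun i _ => (measurable_pi_apply i).mul
        (Finset.measurable_sum _ fun j _ => (measurable_pi_apply j).const_mul _)
  -- the conditional-mean vector
  have hmf2 : ∀ ω, Exx *ᵥ wk ω - Exy = Exx *ᵥ (wk ω - wstar) := fun ω => by
    rw [Matrix.mulVec_sub, hws]
  have hvm : ∀ i, Measurable (fun w : Fin n → ℝ => (Exx *ᵥ w - Exy) i) := by
    intro i
    simp only [Pi.sub_apply, Matrix.mulVec, dotProduct]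
    exact (Finset.measurable_sum _ fun j _ => (measurable_pi_apply j).const_mul _).sub
      measurable_const
  have hmfmeas : ∀ i, Measurable (fun ω => (Exx *ᵥ wk ω - Exy) i) := fun i =>
    (hvm i).comp hwmeas
  -- integrability facts (in the ambient σ-algebra)
  have int_mg : ∀ i j, Integrable (fun ω => (Exx *ᵥ wk ω - Exy) i * gk ω j) P := by
    intro i j
    have he : (fun ω => (Exx *ᵥ wk ω - Exy) i * gk ω j)
        = fun ω => (∑ k, Exx i k * (wk ω k * gk ω j)) - Exy i * gk ω j := by
      funext ω
      simp only [Pi.sub_apply, Matrix.mulVec, dotProduct, sub_mul, Finset.sum_mul]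
      congr 1
      exact Finset.sum_congr rfl fun k _ => by ring
    rw [he]
    exact (integrable_finset_sum _ fun k _ => ((hwgi k j).const_mul _)).sub
      ((hgi j).const_mul _)
  have int_mm : ∀ i j,
      Integrable (fun ω => (Exx *ᵥ wk ω - Exy) i * (Exx *ᵥ wk ω - Exy) j) P := by
    intro i j
    have hbound : ∀ ω, ‖(Exx *ᵥ wk ω - Exy) i * (Exx *ᵥ wk ω - Exy) j‖
        ≤ (Exx i i + Exx j j) * (J (wk ω) - J wstar) := by
      intro ω
      have hi := psd_entry_bound Exx hAT hpsd (wk ω - wstar) i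
      have hj := psd_entry_bound Exx hAT hpsd (wk ω - wstar) j
      have hq : (wk ω - wstar) ⬝ᵥ (Exx *ᵥ (wk ω - wstar)) = 2 * (J (wk ω) - J wstar) := by
        rw [hJq (wk ω)]; ring
      rw [hq] at hi hj
      rw [hmf2 ω, Real.norm_eq_abs, abs_mul]
      set a := (Exx *ᵥ (wk ω - wstar)) i
      set b := (Exx *ᵥ (wk ω - wstar)) j
      nlinarith [sq_nonneg (|a| - |b|), sq_abs a, sq_abs b, abs_nonneg a, abs_nonneg b]
    exact Integrable.mono' ((hJw.sub (integrable_const _)).const_mul _)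
      (((hmfmeas i).mul (hmfmeas j)).aestronglyMeasurable)
      (Filter.Eventually.of_forall hbound)
  have hintL : Integrable (fun ω => (Exx *ᵥ wk ω - Exy) ⬝ᵥ gk ω) P := by
    have he : (fun ω => (Exx *ᵥ wk ω - Exy) ⬝ᵥ gk ω)
        = fun ω => ∑ i, (Exx *ᵥ wk ω - Exy) i * gk ω i := by
      funext ω; rfl
    rw [he]
    exact integrable_finset_sum _ fun i _ => int_mg i i
  have hintQ : Integrable (fun ω => gk ω ⬝ᵥ (Exx *ᵥ gk ω)) P := by
    have he : (fun ω => gk ω ⬝ᵥ (Exx *ᵥ gk ω))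
        = fun ω => ∑ i, ∑ j, Exx i j * (gk ω i * gk ω j) := by
      funext ω
      simp only [dotProduct, Matrix.mulVec, Finset.mul_sum]
      exact Finset.sum_congr rfl fun i _ => Finset.sum_congr rfl fun j _ => by ring
    rw [he]
    exact integrable_finset_sum _ fun i _ =>
      integrable_finset_sum _ fun j _ => (hgij i j).const_mul _
  have int_f2 : Integrable ((-ε) • fun ω => (Exx *ᵥ wk ω - Exy) ⬝ᵥ gk ω) P := hintL.smul (-ε)
  have int_f3 : Integrable ((ε^2/2) • fun ω => gk ω ⬝ᵥ (Exx *ᵥ gk ω)) P := hintQ.smul (ε^2/2)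
  have int_const : Integrable (fun _ : Ω => lam) P := integrable_const _
  have hJsubint : Integrable ((fun ω => J (wk ω - ε • gk ω)) + fun _ => lam) P :=
    hJwg.add int_const
  -- now the σ-algebra
  have hm : MeasurableSpace.comap wk inferInstance ≤ (inferInstance : MeasurableSpace Ω) :=
    hwmeas.comap_le
  haveI hfin : IsFiniteMeasure (P.trim hm) := isFiniteMeasure_trim hm
  set m : MeasurableSpace Ω := MeasurableSpace.comap wk inferInstance with hmdef
  have hwkm : Measurable[m] wk := Measurable.of_comap_le le_rfl
  have hsm_mf : ∀ i, StronglyMeasurable[m] (fun ω => (Exx *ᵥ wk ω - Exy) i) := fun i =>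
    (Measurable.stronglyMeasurable ((hvm i).comp hwkm))
  -- conditional expectation computations
  have hce_mf : ∀ i j, P[(fun ω => (Exx *ᵥ wk ω - Exy) i * (Exx *ᵥ wk ω - Exy) j)|m]
      = fun ω => (Exx *ᵥ wk ω - Exy) i * (Exx *ᵥ wk ω - Exy) j :=
    fun i j => condExp_of_stronglyMeasurable hm ((hsm_mf i).mul (hsm_mf j)) (int_mm i j)
  have hce_J : P[(fun ω => J (wk ω))|m] = fun ω => J (wk ω) :=
    condExp_of_stronglyMeasurable hm (Measurable.stronglyMeasurable (hJmeas.comp hwkm)) hJw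
  have hpull : ∀ i j, P[(fun ω => (Exx *ᵥ wk ω - Exy) i * gk ω j)|m]
      =ᵐ[P] fun ω => (Exx *ᵥ wk ω - Exy) i * (Exx *ᵥ wk ω - Exy) j := by
    intro i j
    have h := condExp_mul_of_stronglyMeasurable_left (μ := P) (hsm_mf i) (int_mg i j) (hgi j)
    refine h.trans ?_
    filter_upwards [hmean j] with ω hω
    simp only [Pi.mul_apply]
    rw [hω]
  have hB : ∀ i j, P[(fun ω => gk ω i * gk ω j)|m]
      =ᵐ[P] fun ω => G i j + (Exx *ᵥ wk ω - Exy) i * (Exx *ᵥ wk ω - Exy) j := by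
    intro i j
    have e1 : (fun ω => (gk ω i - (Exx *ᵥ wk ω - Exy) i) * (gk ω j - (Exx *ᵥ wk ω - Exy) j))
        = (fun ω => gk ω i * gk ω j) - ((fun ω => (Exx *ᵥ wk ω - Exy) i * gk ω j)
            + ((fun ω => (Exx *ᵥ wk ω - Exy) j * gk ω i)
              - fun ω => (Exx *ᵥ wk ω - Exy) i * (Exx *ᵥ wk ω - Exy) j)) := by
      funext ω
      simp only [Pi.sub_apply, Pi.add_apply]
      ring
    have hcv : P[(fun ω => gk ω i * gk ω j) - ((fun ω => (Exx *ᵥ wk ω - Exy) i * gk ω j)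
            + ((fun ω => (Exx *ᵥ wk ω - Exy) j * gk ω i)
              - fun ω => (Exx *ᵥ wk ω - Exy) i * (Exx *ᵥ wk ω - Exy) j))|m]
        =ᵐ[P] fun _ => G i j := by
      rw [← e1]; exact hcov i j
    have h2 := condExp_sub (μ := P) (m := m) (hgij i j)
      ((int_mg i j).add ((int_mg j i).sub (int_mm i j)))
    have h3 := condExp_add (μ := P) (m := m) (int_mg i j) ((int_mg j i).sub (int_mm i j))
    have h4 := condExp_sub (μ := P) (m := m) (int_mg j i) (int_mm i j)
    filter_upwards [hcv, h2, h3, h4, hpull i j, hpull j i] with ω c1 c2 c3 c4 c5 c6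
    have c7 := congrFun (hce_mf i j) ω
    simp only [Pi.sub_apply, Pi.add_apply] at c1 c2 c3 c4 c5 c6 c7 ⊢
    rw [c2, c3, c4, c5, c6, c7] at c1
    linarith [c1]
  have hL : P[(fun ω => (Exx *ᵥ wk ω - Exy) ⬝ᵥ gk ω)|m]
      =ᵐ[P] fun ω => (Exx *ᵥ wk ω - Exy) ⬝ᵥ (Exx *ᵥ wk ω - Exy) := by
    have e : (fun ω => (Exx *ᵥ wk ω - Exy) ⬝ᵥ gk ω)
        = ∑ i : Fin n, fun ω => (Exx *ᵥ wk ω - Exy) i * gk ω i := by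
      funext ω; rw [Finset.sum_apply]; rfl
    rw [e]
    refine (condExp_finsetSum (μ := P) (m := m) fun i _ => int_mg i i).trans ?_
    have hall : ∀ᵐ ω ∂P, ∀ i : Fin n,
        (P[(fun ω => (Exx *ᵥ wk ω - Exy) i * gk ω i)|m]) ω
          = (Exx *ᵥ wk ω - Exy) i * (Exx *ᵥ wk ω - Exy) i :=
      ae_all_iff.mpr fun i => hpull i i
    filter_upwards [hall] with ω hω
    rw [Finset.sum_apply]
    exact Finset.sum_congr rfl fun i _ => hω i
  have hQ : P[(fun ω => gk ω ⬝ᵥ (Exx *ᵥ gk ω))|m]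
      =ᵐ[P] fun ω => ∑ i, ∑ j, Exx i j * (G i j
        + (Exx *ᵥ wk ω - Exy) i * (Exx *ᵥ wk ω - Exy) j) := by
    have e : (fun ω => gk ω ⬝ᵥ (Exx *ᵥ gk ω))
        = ∑ i : Fin n, ∑ j : Fin n, Exx i j • fun ω => gk ω i * gk ω j := by
      funext ω
      simp only [Finset.sum_apply, Pi.smul_apply, smul_eq_mul, dotProduct,
        Matrix.mulVec, Finset.mul_sum]
      exact Finset.sum_congr rfl fun i _ => Finset.sum_congr rfl fun j _ => by ring
    rw [e]
    have hint : ∀ i, Integrable (∑ j : Fin n, Exx i j • fun ω => gk ω i * gk ω j) P := by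
      intro i
      have h0 := integrable_finset_sum (μ := P) Finset.univ
        (fun j (_ : j ∈ Finset.univ) => ((hgij i j).smul (Exx i j)))
      have he2 : (∑ j : Fin n, Exx i j • fun ω => gk ω i * gk ω j)
          = fun a => ∑ j : Fin n, (Exx i j • fun ω => gk ω i * gk ω j) a := by
        funext a; rw [Finset.sum_apply]
      rw [he2]; exact h0
    refine (condExp_finsetSum (μ := P) (m := m) fun i _ => hint i).trans ?_
    have hall : ∀ᵐ ω ∂P, ∀ i : Fin n,
        (P[∑ j : Fin n, Exx i j • fun ω => gk ω i * gk ω j|m]) ω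
          = ∑ j, Exx i j * (G i j + (Exx *ᵥ wk ω - Exy) i * (Exx *ᵥ wk ω - Exy) j) := by
      refine ae_all_iff.mpr fun i => ?_
      have hint2 : ∀ j, Integrable (Exx i j • fun ω => gk ω i * gk ω j) P :=
        fun j => (hgij i j).smul (Exx i j)
      have hsumj := condExp_finsetSum (μ := P) (m := m) (s := Finset.univ)
        (fun j _ => hint2 j)
      have halljj : ∀ᵐ ω ∂P, ∀ j : Fin n,
          (P[Exx i j • fun ω => gk ω i * gk ω j|m]) ω
            = Exx i j * (G i j + (Exx *ᵥ wk ω - Exy) i * (Exx *ᵥ wk ω - Exy) j) := by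
        refine ae_all_iff.mpr fun j => ?_
        have hs := condExp_smul (μ := P) (m := m) (Exx i j) (fun ω => gk ω i * gk ω j)
        filter_upwards [hs, hB i j] with ω d1 d2
        rw [d1]
        simp only [Pi.smul_apply, smul_eq_mul]
        rw [d2]
      filter_upwards [hsumj, halljj] with ω d1 d2
      rw [d1, Finset.sum_apply]
      exact Finset.sum_congr rfl fun j _ => d2 j
    filter_upwards [hall] with ω hω
    rw [Finset.sum_apply]
    exact Finset.sum_congr rfl fun i _ => hω i
  -- decomposition of J (wk - ε gk)
  have hFdec : (fun ω => J (wk ω - ε • gk ω))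
      = (fun ω => J (wk ω)) + ((-ε) • (fun ω => (Exx *ᵥ wk ω - Exy) ⬝ᵥ gk ω)
          + (ε^2/2) • fun ω => gk ω ⬝ᵥ (Exx *ᵥ gk ω)) := by
    funext ω
    simp only [Pi.add_apply, Pi.smul_apply, smul_eq_mul]
    have hsub : wk ω - ε • gk ω - wstar = (wk ω - wstar) - ε • gk ω := by
      funext k
      simp only [Pi.sub_apply, Pi.smul_apply, smul_eq_mul]
      ring
    rw [hJq (wk ω - ε • gk ω), hJq (wk ω), hsub,
      quad_step Exx hAT (wk ω - wstar) (gk ω) ε, hmf2 ω]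
    ring
  have hceF : P[(fun ω => J (wk ω - ε • gk ω))|m]
      =ᵐ[P] fun ω => J (wk ω) + ((-ε) * ((Exx *ᵥ wk ω - Exy) ⬝ᵥ (Exx *ᵥ wk ω - Exy))
        + (ε^2/2) * (∑ i, ∑ j, Exx i j * (G i j
          + (Exx *ᵥ wk ω - Exy) i * (Exx *ᵥ wk ω - Exy) j))) := by
    rw [hFdec]
    refine (condExp_add (μ := P) (m := m) hJw (int_f2.add int_f3)).trans ?_
    have h5 := condExp_add (μ := P) (m := m) int_f2 int_f3
    have h6 := condExp_smul (μ := P) (m := m) (-ε) (fun ω => (Exx *ᵥ wk ω - Exy) ⬝ᵥ gk ω)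
    have h7 := condExp_smul (μ := P) (m := m) (ε^2/2) (fun ω => gk ω ⬝ᵥ (Exx *ᵥ gk ω))
    filter_upwards [h5, h6, h7, hL, hQ] with ω c5 c6 c7 cL cQ
    have cJ := congrFun hce_J ω
    simp only [Pi.add_apply, Pi.smul_apply, smul_eq_mul] at c5 c6 c7 ⊢
    rw [c5, c6, c7, cJ, cL, cQ]
  -- monotonicity step
  have hpt : ∀ ω, J (wnext ω) ≤ J (wk ω - ε • gk ω) + lam := by
    intro ω
    rw [hnext ω]
    split_ifs with h
    · linarith [hlam]
    · push_neg at h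
      linarith [h]
  have hmono : P[(fun ω' => J (wnext ω'))|m]
      ≤ᵐ[P] P[((fun ω => J (wk ω - ε • gk ω)) + fun _ => lam)|m] :=
    condExp_mono hJnext hJsubint
      (Filter.Eventually.of_forall fun ω => by simpa using hpt ω)
  have hconst : P[((fun ω => J (wk ω - ε • gk ω)) + fun _ => lam)|m]
      =ᵐ[P] P[(fun ω => J (wk ω - ε • gk ω))|m] + fun _ => lam := by
    refine (condExp_add (μ := P) (m := m) hJwg int_const).trans ?_
    filter_upwards [] with ω
    simp only [Pi.add_apply]
    rw [condExp_const hm lam]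
  -- trace identity
  have htr : ∑ i, ∑ j, Exx i j * G i j = 2 * (Sx * G).trace := by
    rw [Matrix.trace, hSx]
    simp only [Matrix.diag, Matrix.mul_apply, Matrix.smul_apply, smul_eq_mul,
      Finset.mul_sum]
    rw [Finset.sum_comm]
    refine Finset.sum_congr rfl fun i _ => Finset.sum_congr rfl fun j _ => ?_
    rw [hsymm i j]
    ring
  -- final assembly
  filter_upwards [hmono, hconst, hceF] with ω h1 h2 h3
  have key : J (wk ω) + ((-ε) * ((Exx *ᵥ wk ω - Exy) ⬝ᵥ (Exx *ᵥ wk ω - Exy))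
        + (ε^2/2) * (∑ i, ∑ j, Exx i j * (G i j
          + (Exx *ᵥ wk ω - Exy) i * (Exx *ᵥ wk ω - Exy) j)))
      ≤ ρ * J (wk ω) + ε ^ 2 * (Sx * G).trace + (1 - ρ) * J wstar := by
    have hsplit : (∑ i, ∑ j, Exx i j * (G i j
          + (Exx *ᵥ wk ω - Exy) i * (Exx *ᵥ wk ω - Exy) j))
        = (∑ i, ∑ j, Exx i j * G i j)
          + (Exx *ᵥ wk ω - Exy) ⬝ᵥ (Exx *ᵥ (Exx *ᵥ wk ω - Exy)) := by
      have e2 : (Exx *ᵥ wk ω - Exy) ⬝ᵥ (Exx *ᵥ (Exx *ᵥ wk ω - Exy))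
          = ∑ i, ∑ j, Exx i j * ((Exx *ᵥ wk ω - Exy) i * (Exx *ᵥ wk ω - Exy) j) := by
        simp only [dotProduct, Matrix.mulVec, Finset.mul_sum]
        exact Finset.sum_congr rfl fun i _ => Finset.sum_congr rfl fun j _ => by ring
      rw [e2, ← Finset.sum_add_distrib]
      refine Finset.sum_congr rfl fun i _ => ?_
      rw [← Finset.sum_add_distrib]
      exact Finset.sum_congr rfl fun j _ => by ring
    have hqs := quad_step Exx hAT (wk ω - wstar) (Exx *ᵥ (wk ω - wstar)) ε
    have hsb := spec_bound Exx hherm heig ε ρ hρ' (wk ω - wstar)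
    have hJd : (wk ω - wstar) ⬝ᵥ (Exx *ᵥ (wk ω - wstar)) = 2 * (J (wk ω) - J wstar) := by
      rw [hJq (wk ω)]; ring
    rw [hsplit, htr, hmf2 ω]
    rw [hJd] at hsb hqs
    nlinarith [hqs, hsb]
  calc (P[(fun ω' => J (wnext ω'))|m]) ω
      ≤ (P[((fun ω => J (wk ω - ε • gk ω)) + fun _ => lam)|m]) ω := h1
    _ = (P[(fun ω => J (wk ω - ε • gk ω))|m]) ω + lam := by
        rw [h2]; simp [Pi.add_apply]
    _ ≤ lam + ρ * J (wk ω) + ε ^ 2 * (Sx * G).trace + (1 - ρ) * J wstar := by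
        rw [h3]
        linarith [key]
end

section
/- (Theorem 1, Convergence.) Consider the scheduled stochastic gradient iteration with fixed λ > 0 and stepsize ε > 0: at each step k the stochastic gradient g_k, conditionally on w_k, has mean ∇J(w_k) and covariance G; the decision is α_k = 1 if J(w_k - εg_k) - J(w_k) ≤ -λ and α_k = 0 otherwise; and w_{k+1} = w_k - εg_k if α_k = 1, w_{k+1} = w_k otherwise. Suppose ρ = max over the eigenvalues λ̃ of E[xxᵀ] of (1 - ελ̃)² satisfies ρ < 1. Then for every N, E[J(w_N)] ≤ ρᴺ J(w_0) + (1 - ρᴺ) [ J(w*) + (λ + ε² Tr(Σ_x G)) / (1 - ρ) ]. -/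
open MeasureTheory Matrix

lemma quad_identity {n : ℕ} (μ : Measure ((Fin n → ℝ) × ℝ)) [IsProbabilityMeasure μ]
    (hxx : ∀ i j : Fin n, Integrable (fun p => p.1 i * p.1 j) μ)
    (hxy : ∀ i : Fin n, Integrable (fun p => p.1 i * p.2) μ)
    (hyy : Integrable (fun p => p.2 ^ 2) μ)
    (J : (Fin n → ℝ) → ℝ)
    (hJ : ∀ w : Fin n → ℝ, J w = (1 / 2) * ∫ p, (p.2 - p.1 ⬝ᵥ w) ^ 2 ∂μ)
    (Exx : Matrix (Fin n) (Fin n) ℝ)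
    (hExx : ∀ i j, Exx i j = ∫ p, p.1 i * p.1 j ∂μ)
    (Exy : Fin n → ℝ)
    (hExy : ∀ i, Exy i = ∫ p, p.1 i * p.2 ∂μ)
    (wstar : Fin n → ℝ) (hws : Exx *ᵥ wstar = Exy)
    (hherm : Exx.IsHermitian) :
    ∀ v, J v = J wstar + (1/2) * ((v - wstar) ⬝ᵥ (Exx *ᵥ (v - wstar))) := by
  have hexp2 : ∀ (a b : Fin n → ℝ), (fun p : (Fin n → ℝ) × ℝ => (p.1 ⬝ᵥ a) * (p.1 ⬝ᵥ b))
      = fun p => ∑ i, ∑ j, a i * b j * (p.1 i * p.1 j) := by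
    intro a b; funext p
    simp only [dotProduct, Finset.sum_mul, Finset.mul_sum]
    rw [Finset.sum_comm]
    exact Finset.sum_congr rfl fun i _ => Finset.sum_congr rfl fun j _ => by ring
  have hexpy : ∀ (a : Fin n → ℝ), (fun p : (Fin n → ℝ) × ℝ => (p.1 ⬝ᵥ a) * p.2)
      = fun p => ∑ i, a i * (p.1 i * p.2) := by
    intro a; funext p
    simp only [dotProduct, Finset.sum_mul]
    exact Finset.sum_congr rfl fun i _ => by ring
  have hint2 : ∀ (a b : Fin n → ℝ), Integrable (fun p : (Fin n → ℝ) × ℝ => (p.1 ⬝ᵥ a) * (p.1 ⬝ᵥ b)) μ := by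
    intro a b; rw [hexp2]
    exact integrable_finset_sum _ fun i _ => integrable_finset_sum _ fun j _ =>
      ((hxx i j).const_mul _)
  have hinty : ∀ (a : Fin n → ℝ), Integrable (fun p : (Fin n → ℝ) × ℝ => (p.1 ⬝ᵥ a) * p.2) μ := by
    intro a; rw [hexpy]
    exact integrable_finset_sum _ fun i _ => ((hxy i).const_mul _)
  have hval2 : ∀ (a b : Fin n → ℝ), ∫ p, (p.1 ⬝ᵥ a) * (p.1 ⬝ᵥ b) ∂μ = a ⬝ᵥ (Exx *ᵥ b) := by
    intro a b
    rw [show (∫ p, (p.1 ⬝ᵥ a) * (p.1 ⬝ᵥ b) ∂μ) = ∫ p, ∑ i, ∑ j, a i * b j * (p.1 i * p.1 j) ∂μ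
      from by rw [← hexp2]]
    rw [integral_finset_sum _ fun i _ => integrable_finset_sum _ fun j _ => ((hxx i j).const_mul _)]
    have : ∀ i, ∫ p, ∑ j, a i * b j * (p.1 i * p.1 j) ∂μ = ∑ j, a i * b j * Exx i j := by
      intro i
      rw [integral_finset_sum _ fun j _ => ((hxx i j).const_mul _)]
      exact Finset.sum_congr rfl fun j _ => by rw [integral_const_mul, hExx]
    simp only [this, dotProduct, mulVec, Finset.mul_sum]
    exact Finset.sum_congr rfl fun i _ => Finset.sum_congr rfl fun j _ => by ring
  have hvaly : ∀ (a : Fin n → ℝ), ∫ p, (p.1 ⬝ᵥ a) * p.2 ∂μ = a ⬝ᵥ Exy := by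
    intro a
    rw [show (∫ p, (p.1 ⬝ᵥ a) * p.2 ∂μ) = ∫ p, ∑ i, a i * (p.1 i * p.2) ∂μ
      from by rw [← hexpy]]
    rw [integral_finset_sum _ fun i _ => ((hxy i).const_mul _)]
    simp only [dotProduct]
    exact Finset.sum_congr rfl fun i _ => by rw [integral_const_mul, hExy]
  have hI1 : Integrable (fun p : (Fin n → ℝ) × ℝ => (p.2 - p.1 ⬝ᵥ wstar)^2) μ := by
    have : (fun p : (Fin n → ℝ) × ℝ => (p.2 - p.1 ⬝ᵥ wstar)^2)
        = fun p => p.2^2 + (-2) * ((p.1 ⬝ᵥ wstar) * p.2) + (p.1 ⬝ᵥ wstar) * (p.1 ⬝ᵥ wstar) := by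
      funext p; ring
    rw [this]
    exact ((hyy.add ((hinty wstar).const_mul _)).add (hint2 wstar wstar))
  intro v
  set d := v - wstar with hd
  have hsplit : (fun p : (Fin n → ℝ) × ℝ => (p.2 - p.1 ⬝ᵥ v)^2)
      = fun p => ((p.2 - p.1 ⬝ᵥ wstar)^2 + (-2) * ((p.1 ⬝ᵥ d) * p.2)
          + 2 * ((p.1 ⬝ᵥ wstar) * (p.1 ⬝ᵥ d))) + (p.1 ⬝ᵥ d) * (p.1 ⬝ᵥ d) := by
    funext p
    have : p.1 ⬝ᵥ v = p.1 ⬝ᵥ wstar + p.1 ⬝ᵥ d := by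
      rw [hd, dotProduct_sub]; ring
    rw [this]; ring
  have hws' : wstar ⬝ᵥ (Exx *ᵥ d) = d ⬝ᵥ Exy := by
    rw [dotProduct_mulVec, show wstar ᵥ* Exx = Exx *ᵥ wstar from by
      rw [← Matrix.mulVec_transpose]
      congr 1,
      hws, dotProduct_comm]
  have hJs : ∫ p, (p.2 - p.1 ⬝ᵥ wstar)^2 ∂μ = 2 * J wstar := by rw [hJ wstar]; ring
  have e1 : Integrable (fun p : (Fin n → ℝ) × ℝ => (p.2 - p.1 ⬝ᵥ wstar)^2
      + (-2) * ((p.1 ⬝ᵥ d) * p.2)) μ := hI1.add ((hinty d).const_mul _)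
  have e2 : Integrable (fun p : (Fin n → ℝ) × ℝ => ((p.2 - p.1 ⬝ᵥ wstar)^2
      + (-2) * ((p.1 ⬝ᵥ d) * p.2)) + 2 * ((p.1 ⬝ᵥ wstar) * (p.1 ⬝ᵥ d))) μ :=
    e1.add ((hint2 wstar d).const_mul _)
  rw [hJ v, hsplit, integral_add e2 (hint2 d d), integral_add e1 ((hint2 wstar d).const_mul _),
    integral_add hI1 ((hinty d).const_mul _), integral_const_mul, integral_const_mul,
    hval2, hval2, hvaly, hws', hJs]
  ring


section Spec
variable {n : ℕ} {A : Matrix (Fin n) (Fin n) ℝ} (hA : A.IsHermitian)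

lemma aux_comm (v : Fin n → ℝ) :
    star (hA.eigenvectorUnitary : Matrix (Fin n) (Fin n) ℝ) *ᵥ (A *ᵥ v)
      = fun i => hA.eigenvalues i *
        (star (hA.eigenvectorUnitary : Matrix (Fin n) (Fin n) ℝ) *ᵥ v) i := by
  set U := (hA.eigenvectorUnitary : Matrix (Fin n) (Fin n) ℝ)
  have h1 : star U * A = diagonal (RCLike.ofReal ∘ hA.eigenvalues) * star U := by
    have := hA.conjStarAlgAut_star_eigenvectorUnitary
    simp only [Unitary.conjStarAlgAut_star_apply, Unitary.coe_star] at this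
    calc star U * A = (star U * A * U) * star U := by
          rw [mul_assoc, mul_assoc, (Matrix.mem_unitaryGroup_iff).mp hA.eigenvectorUnitary.2,
            mul_one]
      _ = diagonal (RCLike.ofReal ∘ hA.eigenvalues) * star U := by rw [this]
  rw [mulVec_mulVec, h1, ← mulVec_mulVec]
  funext i
  simp [mulVec_diagonal, RCLike.ofReal]

lemma aux_dot_inv (a b : Fin n → ℝ) :
    (star (hA.eigenvectorUnitary : Matrix (Fin n) (Fin n) ℝ) *ᵥ a) ⬝ᵥ
    (star (hA.eigenvectorUnitary : Matrix (Fin n) (Fin n) ℝ) *ᵥ b) = a ⬝ᵥ b := by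
  set U := (hA.eigenvectorUnitary : Matrix (Fin n) (Fin n) ℝ)
  have hstar : star U = Uᵀ := by
    rw [Matrix.star_eq_conjTranspose, conjTranspose_eq_transpose_of_trivial]
  rw [dotProduct_mulVec, hstar, Matrix.mulVec_transpose, vecMul_vecMul, ← hstar,
    (Matrix.mem_unitaryGroup_iff).mp hA.eigenvectorUnitary.2, vecMul_one]

lemma aux_quad (v : Fin n → ℝ) :
    v ⬝ᵥ (A *ᵥ v) = ∑ i, hA.eigenvalues i *
      ((star (hA.eigenvectorUnitary : Matrix (Fin n) (Fin n) ℝ) *ᵥ v) i)^2 := by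
  rw [← aux_dot_inv hA v (A *ᵥ v), aux_comm hA v]
  simp [dotProduct]
  exact Finset.sum_congr rfl fun i _ => by ring

lemma aux_norm (v : Fin n → ℝ) :
    ∑ i, ((star (hA.eigenvectorUnitary : Matrix (Fin n) (Fin n) ℝ) *ᵥ v) i)^2
      = ∑ i, (v i)^2 := by
  have := aux_dot_inv hA v v
  simpa [dotProduct, sq] using this

lemma aux_qnonneg (hpos : ∀ i, 0 ≤ hA.eigenvalues i) (v : Fin n → ℝ) :
    0 ≤ v ⬝ᵥ (A *ᵥ v) := by
  rw [aux_quad hA v]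
  exact Finset.sum_nonneg fun i _ => mul_nonneg (hpos i) (sq_nonneg _)

lemma aux_lower (lmin : ℝ) (h : ∀ i, lmin ≤ hA.eigenvalues i) (v : Fin n → ℝ) :
    lmin * ∑ i, (v i)^2 ≤ v ⬝ᵥ (A *ᵥ v) := by
  rw [aux_quad hA v, ← aux_norm hA v, Finset.mul_sum]
  exact Finset.sum_le_sum fun i _ => mul_le_mul_of_nonneg_right (h i) (sq_nonneg _)

lemma aux_contract (ε ρ : ℝ) (hpos : ∀ i, 0 ≤ hA.eigenvalues i)
    (hb : ∀ i, (1 - ε * hA.eigenvalues i)^2 ≤ ρ) (v : Fin n → ℝ) :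
    (v - ε • (A *ᵥ v)) ⬝ᵥ (A *ᵥ (v - ε • (A *ᵥ v))) ≤ ρ * (v ⬝ᵥ (A *ᵥ v)) := by
  set U := (hA.eigenvectorUnitary : Matrix (Fin n) (Fin n) ℝ)
  set c := star U *ᵥ v with hc
  have hcu : star U *ᵥ (v - ε • (A *ᵥ v)) = fun i => (1 - ε * hA.eigenvalues i) * c i := by
    rw [mulVec_sub, mulVec_smul, aux_comm hA v]
    funext i; simp [hc]; ring
  rw [aux_quad hA, aux_quad hA, hcu, Finset.mul_sum]
  refine Finset.sum_le_sum fun i _ => ?_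
  have h3 : hA.eigenvalues i * ((1 - ε * hA.eigenvalues i) * c i)^2
      = (1 - ε * hA.eigenvalues i)^2 * (hA.eigenvalues i * (c i)^2) := by ring
  rw [h3]
  exact mul_le_mul_of_nonneg_right (hb i) (mul_nonneg (hpos i) (sq_nonneg _))

end Spec

section StepAux
variable {n : ℕ} {Ω : Type*} [MeasurableSpace Ω]

lemma step_aux (P : Measure Ω) [IsProbabilityMeasure P]
    (Exx : Matrix (Fin n) (Fin n) ℝ) (Exy : Fin n → ℝ) (G : Matrix (Fin n) (Fin n) ℝ)
    (wstar : Fin n → ℝ) (hws : Exx *ᵥ wstar = Exy)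
    (J : (Fin n → ℝ) → ℝ)
    (hquad : ∀ v, J v = J wstar + (1/2) * ((v - wstar) ⬝ᵥ (Exx *ᵥ (v - wstar))))
    (hherm : Exx.IsHermitian)
    (ε ρ lmin : ℝ)
    (heig : ∀ i, 0 ≤ hherm.eigenvalues i)
    (hlmin : ∀ i, lmin ≤ hherm.eigenvalues i) (hlmin0 : 0 < lmin)
    (hbd : ∀ i, (1 - ε * hherm.eigenvalues i)^2 ≤ ρ)
    (W Gf : Ω → Fin n → ℝ) (hWmeas : Measurable W)
    (hgi : ∀ i, Integrable (fun ω => Gf ω i) P)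
    (hgij : ∀ i j, Integrable (fun ω => Gf ω i * Gf ω j) P)
    (hwgi : ∀ i j, Integrable (fun ω => W ω i * Gf ω j) P)
    (hJw : Integrable (fun ω => J (W ω)) P)
    (hJwg : Integrable (fun ω => J (W ω - ε • Gf ω)) P)
    (hmean : ∀ i, P[(fun ω => Gf ω i) | MeasurableSpace.comap W inferInstance]
      =ᵐ[P] fun ω => (Exx *ᵥ W ω - Exy) i)
    (hcov : ∀ i j,
      P[(fun ω => (Gf ω i - (Exx *ᵥ W ω - Exy) i) * (Gf ω j - (Exx *ᵥ W ω - Exy) j)) |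
          MeasurableSpace.comap W inferInstance]
        =ᵐ[P] fun _ => G i j) :
    ∫ ω, J (W ω - ε • Gf ω) ∂P ≤ ρ * ∫ ω, J (W ω) ∂P + (1 - ρ) * J wstar
      + ε^2 * ((1/2) * ∑ i, ∑ j, Exx i j * G i j) := by
  have hmk : MeasurableSpace.comap W inferInstance ≤ _ := hWmeas.comap_le
  -- pointwise rewriting of the conditional mean
  have hMrw : ∀ ω, Exx *ᵥ W ω - Exy = Exx *ᵥ (W ω - wstar) := fun ω => by
    rw [Matrix.mulVec_sub, hws]
  have hMco : ∀ (ω : Ω) (i : Fin n),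
      (Exx *ᵥ (W ω - wstar)) i = ∑ l, Exx i l * (W ω l - wstar l) := by
    intro ω i; simp [mulVec, dotProduct]
  -- integrability of the quadratic form of d
  have hQd_eq : (fun ω => (W ω - wstar) ⬝ᵥ (Exx *ᵥ (W ω - wstar)))
      = fun ω => 2 * J (W ω) - 2 * J wstar := by
    funext ω; rw [hquad (W ω)]; ring
  have hqd_int : Integrable (fun ω => (W ω - wstar) ⬝ᵥ (Exx *ᵥ (W ω - wstar))) P := by
    rw [hQd_eq]; exact (hJw.const_mul 2).sub (integrable_const _)
  have hQd_nonneg : ∀ ω, 0 ≤ (W ω - wstar) ⬝ᵥ (Exx *ᵥ (W ω - wstar)) :=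
    fun ω => aux_qnonneg hherm heig _
  have hdmeas : ∀ i, Measurable (fun ω => W ω i - wstar i) :=
    fun i => ((measurable_pi_apply i).comp hWmeas).sub measurable_const
  -- integrability of sum of squares
  have hsum_meas : Measurable (fun ω => ∑ i, (W ω i - wstar i)^2) :=
    Finset.measurable_sum _ fun i _ => (hdmeas i).pow_const 2
  have hsum_le : ∀ ω, ∑ i, (W ω i - wstar i)^2
      ≤ (1/lmin) * ((W ω - wstar) ⬝ᵥ (Exx *ᵥ (W ω - wstar))) := by
    intro ω
    have h := aux_lower hherm lmin hlmin (W ω - wstar)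
    have h2 : ∑ i, ((W ω - wstar) i)^2 = ∑ i, (W ω i - wstar i)^2 :=
      Finset.sum_congr rfl fun i _ => by simp [Pi.sub_apply]
    rw [h2] at h
    rw [div_mul_eq_mul_div, le_div_iff₀ hlmin0, mul_comm]
    linarith [h]
  have hsum_nonneg : ∀ ω, (0:ℝ) ≤ ∑ i, (W ω i - wstar i)^2 :=
    fun ω => Finset.sum_nonneg fun i _ => sq_nonneg _
  have hsum_int : Integrable (fun ω => ∑ i, (W ω i - wstar i)^2) P := by
    refine Integrable.mono' (hqd_int.const_mul (1/lmin)) hsum_meas.aestronglyMeasurable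
      (Filter.Eventually.of_forall fun ω => ?_)
    rw [Real.norm_eq_abs, abs_of_nonneg (hsum_nonneg ω)]
    exact hsum_le ω
  -- integrability of products of coordinates of d
  have hdd : ∀ i j, Integrable (fun ω => (W ω i - wstar i) * (W ω j - wstar j)) P := by
    intro i j
    refine Integrable.mono' hsum_int ((hdmeas i).mul (hdmeas j)).aestronglyMeasurable
      (Filter.Eventually.of_forall fun ω => ?_)
    rw [Real.norm_eq_abs]
    have h1 : (W ω i - wstar i)^2 ≤ ∑ l, (W ω l - wstar l)^2 :=
      Finset.single_le_sum (f := fun l => (W ω l - wstar l)^2)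
        (fun l _ => sq_nonneg _) (Finset.mem_univ i)
    have h2 : (W ω j - wstar j)^2 ≤ ∑ l, (W ω l - wstar l)^2 :=
      Finset.single_le_sum (f := fun l => (W ω l - wstar l)^2)
        (fun l _ => sq_nonneg _) (Finset.mem_univ j)
    cases abs_cases ((W ω i - wstar i) * (W ω j - wstar j)) with
    | inl h => nlinarith [sq_nonneg (W ω i - wstar i - (W ω j - wstar j))]
    | inr h => nlinarith [sq_nonneg (W ω i - wstar i + (W ω j - wstar j))]
  -- integrability of products d * g
  have hdg : ∀ i j, Integrable (fun ω => (W ω i - wstar i) * Gf ω j) P := by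
    intro i j
    have e : (fun ω => (W ω i - wstar i) * Gf ω j)
        = fun ω => W ω i * Gf ω j - wstar i * Gf ω j := by funext ω; ring
    rw [e]; exact (hwgi i j).sub ((hgi j).const_mul _)
  -- expansions involving M := Exx *ᵥ (W - wstar)
  have hexpMr : ∀ (f : Ω → ℝ) (j : Fin n), (fun ω => f ω * (Exx *ᵥ (W ω - wstar)) j)
      = fun ω => ∑ l, Exx j l * (f ω * (W ω l - wstar l)) := by
    intro f j; funext ω; rw [hMco, Finset.mul_sum]
    exact Finset.sum_congr rfl fun l _ => by ring
  have hexpMl : ∀ (f : Ω → ℝ) (i : Fin n), (fun ω => (Exx *ᵥ (W ω - wstar)) i * f ω)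
      = fun ω => ∑ l, Exx i l * ((W ω l - wstar l) * f ω) := by
    intro f i; funext ω; rw [hMco, Finset.sum_mul]
    exact Finset.sum_congr rfl fun l _ => by ring
  have hdM : ∀ i j, Integrable (fun ω => (W ω i - wstar i) * (Exx *ᵥ (W ω - wstar)) j) P := by
    intro i j; rw [hexpMr]
    exact integrable_finset_sum _ fun l _ => ((hdd i l).const_mul _)
  have hMg : ∀ i j, Integrable (fun ω => (Exx *ᵥ (W ω - wstar)) i * Gf ω j) P := by
    intro i j; rw [hexpMl]
    exact integrable_finset_sum _ fun l _ => ((hdg l j).const_mul _)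
  have hMM : ∀ i j, Integrable
      (fun ω => (Exx *ᵥ (W ω - wstar)) i * (Exx *ᵥ (W ω - wstar)) j) P := by
    intro i j; rw [hexpMl]
    exact integrable_finset_sum _ fun l _ => ((hdM l j).const_mul _)
  have hgM : ∀ i j, Integrable (fun ω => Gf ω i * (Exx *ᵥ (W ω - wstar)) j) P := by
    intro i j
    have e : (fun ω => Gf ω i * (Exx *ᵥ (W ω - wstar)) j)
        = fun ω => (Exx *ᵥ (W ω - wstar)) j * Gf ω i := by funext ω; ring
    rw [e]; exact hMg j i
  -- the key pull-out identity
  have hWmk : Measurable[MeasurableSpace.comap W inferInstance] W := Measurable.of_comap_le le_rfl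
  have key : ∀ (f : Ω → ℝ) (j : Fin n), Measurable[MeasurableSpace.comap W inferInstance] f →
      Integrable (fun ω => f ω * Gf ω j) P →
      ∫ ω, f ω * Gf ω j ∂P = ∫ ω, f ω * (Exx *ᵥ (W ω - wstar)) j ∂P := by
    intro f j hf hint
    have h1 := condExp_mul_of_stronglyMeasurable_left (μ := P) (m := MeasurableSpace.comap W inferInstance) hf.stronglyMeasurable
      (show Integrable ((fun ω => f ω) * fun ω => Gf ω j) P from hint) (hgi j)
    have h2 : (fun ω => f ω) * (P[(fun ω => Gf ω j) | MeasurableSpace.comap W inferInstance])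
        =ᵐ[P] fun ω => f ω * (Exx *ᵥ (W ω - wstar)) j := by
      filter_upwards [hmean j] with ω hω
      simp only [Pi.mul_apply, hω, hMrw ω]
    calc ∫ ω, f ω * Gf ω j ∂P
        = ∫ ω, (P[((fun ω => f ω) * fun ω => Gf ω j) | MeasurableSpace.comap W inferInstance]) ω ∂P :=
          (integral_condExp (μ := P) (f := (fun ω => f ω) * fun ω => Gf ω j) hmk).symm
      _ = ∫ ω, f ω * (Exx *ᵥ (W ω - wstar)) j ∂P :=
          integral_congr_ae (h1.trans h2)
  have hdmk : ∀ i, Measurable[MeasurableSpace.comap W inferInstance] (fun ω => W ω i - wstar i) :=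
    fun i => ((measurable_pi_apply i).comp hWmk).sub measurable_const
  have hMmk : ∀ i, Measurable[MeasurableSpace.comap W inferInstance] (fun ω => (Exx *ᵥ (W ω - wstar)) i) := by
    intro i
    have e : (fun ω => (Exx *ᵥ (W ω - wstar)) i)
        = fun ω => ∑ l, Exx i l * (W ω l - wstar l) := by funext ω; rw [hMco]
    rw [e]
    exact Finset.measurable_sum _ fun l _ =>
      (measurable_const.mul (((measurable_pi_apply l).comp hWmk).sub measurable_const))
  -- a generic 4-term expansion of ∫ (a - t c)(b - t e)
  have hsplit4 : ∀ (t : ℝ) (a b c e : Ω → ℝ),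
      Integrable (fun ω => a ω * b ω) P → Integrable (fun ω => a ω * e ω) P →
      Integrable (fun ω => b ω * c ω) P → Integrable (fun ω => c ω * e ω) P →
      ∫ ω, (a ω - t * c ω) * (b ω - t * e ω) ∂P
        = ∫ ω, a ω * b ω ∂P - t * ∫ ω, a ω * e ω ∂P - t * ∫ ω, b ω * c ω ∂P
          + t^2 * ∫ ω, c ω * e ω ∂P := by
    intro t a b c e hab hae hbc hce
    have e1 : (fun ω => (a ω - t * c ω) * (b ω - t * e ω))
        = fun ω => ((a ω * b ω + (-t) * (a ω * e ω)) + (-t) * (b ω * c ω))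
            + t^2 * (c ω * e ω) := by funext ω; ring
    rw [e1,
      integral_add (show Integrable (fun ω => (a ω * b ω + (-t) * (a ω * e ω))
          + (-t) * (b ω * c ω)) P from (hab.add (hae.const_mul _)).add (hbc.const_mul _))
        (hce.const_mul _),
      integral_add (show Integrable (fun ω => a ω * b ω + (-t) * (a ω * e ω)) P from
          hab.add (hae.const_mul _)) (hbc.const_mul _),
      integral_add hab (hae.const_mul _), integral_const_mul, integral_const_mul,
      integral_const_mul]
    ring
  -- value identities
  have hdgval : ∀ i j, ∫ ω, (W ω i - wstar i) * Gf ω j ∂P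
      = ∫ ω, (W ω i - wstar i) * (Exx *ᵥ (W ω - wstar)) j ∂P :=
    fun i j => key _ j (hdmk i) (hdg i j)
  have hMgval : ∀ i j, ∫ ω, (Exx *ᵥ (W ω - wstar)) i * Gf ω j ∂P
      = ∫ ω, (Exx *ᵥ (W ω - wstar)) i * (Exx *ᵥ (W ω - wstar)) j ∂P :=
    fun i j => key _ j (hMmk i) (hMg i j)
  have hcomm : ∀ (a b : Ω → ℝ), ∫ ω, a ω * b ω ∂P = ∫ ω, b ω * a ω ∂P :=
    fun a b => integral_congr_ae (Filter.Eventually.of_forall fun ω => mul_comm _ _)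
  -- covariance identity
  have hgg : ∀ i j, ∫ ω, Gf ω i * Gf ω j ∂P
      = G i j + ∫ ω, (Exx *ᵥ (W ω - wstar)) i * (Exx *ᵥ (W ω - wstar)) j ∂P := by
    intro i j
    have hint : Integrable (fun ω => (Gf ω i - (Exx *ᵥ W ω - Exy) i)
        * (Gf ω j - (Exx *ᵥ W ω - Exy) j)) P := by
      have e : (fun ω => (Gf ω i - (Exx *ᵥ W ω - Exy) i) * (Gf ω j - (Exx *ᵥ W ω - Exy) j))
          = fun ω => ((Gf ω i * Gf ω j
              + (-1 : ℝ) * (Gf ω i * (Exx *ᵥ (W ω - wstar)) j))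
              + (-1 : ℝ) * (Gf ω j * (Exx *ᵥ (W ω - wstar)) i))
              + (Exx *ᵥ (W ω - wstar)) i * (Exx *ᵥ (W ω - wstar)) j := by
        funext ω; rw [hMrw ω]; ring
      rw [e]
      exact (((hgij i j).add ((hgM i j).const_mul _)).add ((hgM j i).const_mul _)).add (hMM i j)
    have hG : ∫ ω, (Gf ω i - (Exx *ᵥ W ω - Exy) i) * (Gf ω j - (Exx *ᵥ W ω - Exy) j) ∂P
        = G i j := by
      rw [← integral_condExp (μ := P) (f := fun ω => (Gf ω i - (Exx *ᵥ W ω - Exy) i)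
          * (Gf ω j - (Exx *ᵥ W ω - Exy) j)) hmk, integral_congr_ae (hcov i j)]
      simp
    have e2 : (fun ω => (Gf ω i - (Exx *ᵥ W ω - Exy) i) * (Gf ω j - (Exx *ᵥ W ω - Exy) j))
        = fun ω => (Gf ω i - 1 * (Exx *ᵥ (W ω - wstar)) i)
            * (Gf ω j - 1 * (Exx *ᵥ (W ω - wstar)) j) := by
      funext ω; rw [hMrw ω]; ring
    have hG2 := hG
    rw [show (∫ ω, (Gf ω i - (Exx *ᵥ W ω - Exy) i) * (Gf ω j - (Exx *ᵥ W ω - Exy) j) ∂P)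
        = ∫ ω, (Gf ω i - 1 * (Exx *ᵥ (W ω - wstar)) i)
            * (Gf ω j - 1 * (Exx *ᵥ (W ω - wstar)) j) ∂P from by rw [← e2],
      hsplit4 1 (fun ω => Gf ω i) (fun ω => Gf ω j)
        (fun ω => (Exx *ᵥ (W ω - wstar)) i) (fun ω => (Exx *ᵥ (W ω - wstar)) j)
        (hgij i j) (hgM i j) (hgM j i) (hMM i j)] at hG2
    have c1 : ∫ ω, Gf ω i * (Exx *ᵥ (W ω - wstar)) j ∂P
        = ∫ ω, (Exx *ᵥ (W ω - wstar)) i * (Exx *ᵥ (W ω - wstar)) j ∂P := by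
      rw [hcomm, hMgval j i, hcomm]
    have c2 : ∫ ω, Gf ω j * (Exx *ᵥ (W ω - wstar)) i ∂P
        = ∫ ω, (Exx *ᵥ (W ω - wstar)) i * (Exx *ᵥ (W ω - wstar)) j ∂P := by
      rw [hcomm, hMgval i j]
    rw [c1, c2] at hG2
    linarith [hG2]
  -- expansion of quadratic-form integrals
  have hQexpand : ∀ (V : Ω → Fin n → ℝ),
      (∀ i j, Integrable (fun ω =>
        (W ω i - wstar i - ε * V ω i) * (W ω j - wstar j - ε * V ω j)) P) →
      ∫ ω, ((W ω - wstar) - ε • V ω) ⬝ᵥ (Exx *ᵥ ((W ω - wstar) - ε • V ω)) ∂P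
        = ∑ i, ∑ j, Exx i j * ∫ ω, (W ω i - wstar i - ε * V ω i)
            * (W ω j - wstar j - ε * V ω j) ∂P := by
    intro V hV
    have e : (fun ω => ((W ω - wstar) - ε • V ω) ⬝ᵥ (Exx *ᵥ ((W ω - wstar) - ε • V ω)))
        = fun ω => ∑ i, ∑ j, Exx i j * ((W ω i - wstar i - ε * V ω i)
            * (W ω j - wstar j - ε * V ω j)) := by
      funext ω
      simp only [dotProduct, mulVec, Pi.sub_apply, Pi.smul_apply, smul_eq_mul,
        Finset.mul_sum]
      exact Finset.sum_congr rfl fun i _ => Finset.sum_congr rfl fun j _ => by ring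
    rw [e]
    refine (integral_finsetSum _ (fun i _ =>
      integrable_finset_sum _ fun j _ => (hV i j).const_mul _)).trans ?_
    refine Finset.sum_congr rfl fun i _ => ?_
    refine (integral_finsetSum _ (fun j _ => (hV i j).const_mul _)).trans ?_
    exact Finset.sum_congr rfl fun j _ => integral_const_mul _ _
  have hpairG_int : ∀ i j, Integrable (fun ω =>
      (W ω i - wstar i - ε * Gf ω i) * (W ω j - wstar j - ε * Gf ω j)) P := by
    intro i j
    have e : (fun ω => (W ω i - wstar i - ε * Gf ω i) * (W ω j - wstar j - ε * Gf ω j))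
        = fun ω => (((W ω i - wstar i) * (W ω j - wstar j)
            + (-ε) * ((W ω i - wstar i) * Gf ω j))
            + (-ε) * ((W ω j - wstar j) * Gf ω i))
            + (ε^2) * (Gf ω i * Gf ω j) := by funext ω; ring
    rw [e]
    exact (((hdd i j).add ((hdg i j).const_mul _)).add
      ((hdg j i).const_mul _)).add ((hgij i j).const_mul _)
  have hpairM_int : ∀ i j, Integrable (fun ω =>
      (W ω i - wstar i - ε * (Exx *ᵥ (W ω - wstar)) i)
        * (W ω j - wstar j - ε * (Exx *ᵥ (W ω - wstar)) j)) P := by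
    intro i j
    have e : (fun ω => (W ω i - wstar i - ε * (Exx *ᵥ (W ω - wstar)) i)
          * (W ω j - wstar j - ε * (Exx *ᵥ (W ω - wstar)) j))
        = fun ω => (((W ω i - wstar i) * (W ω j - wstar j)
            + (-ε) * ((W ω i - wstar i) * (Exx *ᵥ (W ω - wstar)) j))
            + (-ε) * ((W ω j - wstar j) * (Exx *ᵥ (W ω - wstar)) i))
            + (ε^2) * ((Exx *ᵥ (W ω - wstar)) i * (Exx *ᵥ (W ω - wstar)) j) := by
      funext ω; ring
    rw [e]
    exact (((hdd i j).add ((hdM i j).const_mul _)).add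
      ((hdM j i).const_mul _)).add ((hMM i j).const_mul _)
  have hpair : ∀ i j,
      ∫ ω, (W ω i - wstar i - ε * Gf ω i) * (W ω j - wstar j - ε * Gf ω j) ∂P
        = ∫ ω, (W ω i - wstar i - ε * (Exx *ᵥ (W ω - wstar)) i)
            * (W ω j - wstar j - ε * (Exx *ᵥ (W ω - wstar)) j) ∂P + ε^2 * G i j := by
    intro i j
    have h1 := hsplit4 ε (fun ω => W ω i - wstar i) (fun ω => W ω j - wstar j)
      (fun ω => Gf ω i) (fun ω => Gf ω j) (hdd i j) (hdg i j) (hdg j i) (hgij i j)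
    have h2 := hsplit4 ε (fun ω => W ω i - wstar i) (fun ω => W ω j - wstar j)
      (fun ω => (Exx *ᵥ (W ω - wstar)) i) (fun ω => (Exx *ᵥ (W ω - wstar)) j)
      (hdd i j) (hdM i j) (hdM j i) (hMM i j)
    rw [h1, h2, hdgval i j, hdgval j i, hgg i j]
    ring
  -- main identity (A)
  have hptA : ∀ ω, J (W ω - ε • Gf ω) = J wstar + (1/2)
      * (((W ω - wstar) - ε • Gf ω) ⬝ᵥ (Exx *ᵥ ((W ω - wstar) - ε • Gf ω))) := by
    intro ω
    have h := hquad (W ω - ε • Gf ω)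
    rw [show W ω - ε • Gf ω - wstar = (W ω - wstar) - ε • Gf ω from sub_right_comm _ _ _] at h
    exact h
  have hQg_int : Integrable (fun ω =>
      ((W ω - wstar) - ε • Gf ω) ⬝ᵥ (Exx *ᵥ ((W ω - wstar) - ε • Gf ω))) P := by
    have e : (fun ω => ((W ω - wstar) - ε • Gf ω) ⬝ᵥ (Exx *ᵥ ((W ω - wstar) - ε • Gf ω)))
        = fun ω => 2 * J (W ω - ε • Gf ω) - 2 * J wstar := by
      funext ω; rw [hptA ω]; ring
    rw [e]; exact (hJwg.const_mul 2).sub (integrable_const _)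
  have hAeq : ∫ ω, J (W ω - ε • Gf ω) ∂P = J wstar + (1/2)
      * ∫ ω, ((W ω - wstar) - ε • Gf ω) ⬝ᵥ (Exx *ᵥ ((W ω - wstar) - ε • Gf ω)) ∂P := by
    calc ∫ ω, J (W ω - ε • Gf ω) ∂P
        = ∫ ω, (J wstar + (1/2) * (((W ω - wstar) - ε • Gf ω)
            ⬝ᵥ (Exx *ᵥ ((W ω - wstar) - ε • Gf ω)))) ∂P :=
          integral_congr_ae (Filter.Eventually.of_forall hptA)
      _ = J wstar + (1/2) * ∫ ω, ((W ω - wstar) - ε • Gf ω)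
            ⬝ᵥ (Exx *ᵥ ((W ω - wstar) - ε • Gf ω)) ∂P := by
          rw [integral_add (integrable_const _) (hQg_int.const_mul _), integral_const,
            integral_const_mul]
          simp [measure_univ]
  -- (D)
  have hDeq : ∫ ω, (W ω - wstar) ⬝ᵥ (Exx *ᵥ (W ω - wstar)) ∂P
      = 2 * ∫ ω, J (W ω) ∂P - 2 * J wstar := by
    rw [show (fun ω => (W ω - wstar) ⬝ᵥ (Exx *ᵥ (W ω - wstar)))
        = fun ω => 2 * J (W ω) - 2 * J wstar from hQd_eq,
      integral_sub (hJw.const_mul 2) (integrable_const _), integral_const_mul, integral_const]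
    simp [measure_univ]
  have hMmeas : ∀ i, Measurable (fun ω => (Exx *ᵥ (W ω - wstar)) i) := by
    intro i
    have e : (fun ω => (Exx *ᵥ (W ω - wstar)) i)
        = fun ω => ∑ l, Exx i l * (W ω l - wstar l) := by funext ω; rw [hMco]
    rw [e]
    exact Finset.measurable_sum _ fun l _ => measurable_const.mul (hdmeas l)
  -- (C) contraction
  have hQm_meas : Measurable (fun ω =>
      ((W ω - wstar) - ε • (Exx *ᵥ (W ω - wstar)))
        ⬝ᵥ (Exx *ᵥ ((W ω - wstar) - ε • (Exx *ᵥ (W ω - wstar))))) := by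
    have e : (fun ω => ((W ω - wstar) - ε • (Exx *ᵥ (W ω - wstar)))
          ⬝ᵥ (Exx *ᵥ ((W ω - wstar) - ε • (Exx *ᵥ (W ω - wstar)))))
        = fun ω => ∑ i, ∑ j, Exx i j
            * ((W ω i - wstar i - ε * (Exx *ᵥ (W ω - wstar)) i)
              * (W ω j - wstar j - ε * (Exx *ᵥ (W ω - wstar)) j)) := by
      funext ω
      simp only [dotProduct, mulVec, Pi.sub_apply, Pi.smul_apply, smul_eq_mul,
        Finset.mul_sum]
      exact Finset.sum_congr rfl fun i _ => Finset.sum_congr rfl fun j _ => by ring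
    rw [e]
    exact Finset.measurable_sum _ fun i _ => Finset.measurable_sum _ fun j _ =>
      measurable_const.mul (((hdmeas i).sub (measurable_const.mul (hMmeas i))).mul
        ((hdmeas j).sub (measurable_const.mul (hMmeas j))))
  have hQm_int : Integrable (fun ω =>
      ((W ω - wstar) - ε • (Exx *ᵥ (W ω - wstar)))
        ⬝ᵥ (Exx *ᵥ ((W ω - wstar) - ε • (Exx *ᵥ (W ω - wstar))))) P := by
    refine Integrable.mono' (hqd_int.const_mul ρ) hQm_meas.aestronglyMeasurable
      (Filter.Eventually.of_forall fun ω => ?_)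
    rw [Real.norm_eq_abs, abs_of_nonneg (aux_qnonneg hherm heig _)]
    exact aux_contract hherm ε ρ heig hbd (W ω - wstar)
  have hCle : ∫ ω, ((W ω - wstar) - ε • (Exx *ᵥ (W ω - wstar)))
        ⬝ᵥ (Exx *ᵥ ((W ω - wstar) - ε • (Exx *ᵥ (W ω - wstar)))) ∂P
      ≤ ρ * ∫ ω, (W ω - wstar) ⬝ᵥ (Exx *ᵥ (W ω - wstar)) ∂P := by
    calc ∫ ω, ((W ω - wstar) - ε • (Exx *ᵥ (W ω - wstar)))
          ⬝ᵥ (Exx *ᵥ ((W ω - wstar) - ε • (Exx *ᵥ (W ω - wstar)))) ∂P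
        ≤ ∫ ω, ρ * ((W ω - wstar) ⬝ᵥ (Exx *ᵥ (W ω - wstar))) ∂P :=
          integral_mono hQm_int (hqd_int.const_mul ρ)
            (fun ω => aux_contract hherm ε ρ heig hbd (W ω - wstar))
      _ = ρ * ∫ ω, (W ω - wstar) ⬝ᵥ (Exx *ᵥ (W ω - wstar)) ∂P := integral_const_mul _ _
  -- (B)
  have hBeq : ∫ ω, ((W ω - wstar) - ε • Gf ω) ⬝ᵥ (Exx *ᵥ ((W ω - wstar) - ε • Gf ω)) ∂P
      = ∫ ω, ((W ω - wstar) - ε • (Exx *ᵥ (W ω - wstar)))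
          ⬝ᵥ (Exx *ᵥ ((W ω - wstar) - ε • (Exx *ᵥ (W ω - wstar)))) ∂P
        + ε^2 * ∑ i, ∑ j, Exx i j * G i j := by
    rw [hQexpand Gf hpairG_int, hQexpand (fun ω => Exx *ᵥ (W ω - wstar)) hpairM_int]
    have e1 : ∀ i ∈ Finset.univ, ∑ j, Exx i j * (∫ ω, (W ω i - wstar i - ε * Gf ω i)
          * (W ω j - wstar j - ε * Gf ω j) ∂P)
        = ∑ j, (Exx i j * (∫ ω, (W ω i - wstar i - ε * (Exx *ᵥ (W ω - wstar)) i)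
            * (W ω j - wstar j - ε * (Exx *ᵥ (W ω - wstar)) j) ∂P)
          + ε^2 * (Exx i j * G i j)) := by
      intro i _
      refine Finset.sum_congr rfl fun j _ => ?_
      rw [hpair i j]; ring
    rw [Finset.sum_congr rfl e1]
    simp only [Finset.sum_add_distrib, Finset.mul_sum]
  rw [hAeq, hBeq]
  rw [hDeq] at hCle
  ring_nf
  ring_nf at hCle
  linarith [hCle]

end StepAux

theorem stmt9 {n : ℕ} [NeZero n] (μ : Measure ((Fin n → ℝ) × ℝ)) [IsProbabilityMeasure μ]
    (hxx : ∀ i j : Fin n, Integrable (fun p => p.1 i * p.1 j) μ)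
    (hxy : ∀ i : Fin n, Integrable (fun p => p.1 i * p.2) μ)
    (hyy : Integrable (fun p => p.2 ^ 2) μ)
    (J : (Fin n → ℝ) → ℝ)
    (hJ : ∀ w : Fin n → ℝ, J w = (1 / 2) * ∫ p, (p.2 - p.1 ⬝ᵥ w) ^ 2 ∂μ)
    (Exx : Matrix (Fin n) (Fin n) ℝ)
    (hExx : ∀ i j, Exx i j = ∫ p, p.1 i * p.1 j ∂μ)
    (Exy : Fin n → ℝ)
    (hExy : ∀ i, Exy i = ∫ p, p.1 i * p.2 ∂μ)
    (Sx : Matrix (Fin n) (Fin n) ℝ) (hSx : Sx = (1 / 2 : ℝ) • Exx)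
    (wstar : Fin n → ℝ) (hws : Exx *ᵥ wstar = Exy)
    {Ω : Type*} [MeasurableSpace Ω] (P : Measure Ω) [IsProbabilityMeasure P]
    (lam ε : ℝ) (hlam : 0 < lam) (hε : 0 < ε)
    (w g : ℕ → Ω → Fin n → ℝ)
    (hwmeas : ∀ k, Measurable (w k))
    (w0 : Fin n → ℝ) (hw0 : ∀ ω, w 0 ω = w0)
    (G : Matrix (Fin n) (Fin n) ℝ)
    (hgi : ∀ k i, Integrable (fun ω => g k ω i) P)
    (hgij : ∀ k i j, Integrable (fun ω => g k ω i * g k ω j) P)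
    (hwgi : ∀ k i j, Integrable (fun ω => w k ω i * g k ω j) P)
    (hJw : ∀ k, Integrable (fun ω => J (w k ω)) P)
    (hJwg : ∀ k, Integrable (fun ω => J (w k ω - ε • g k ω)) P)
    (hmean : ∀ k i, P[(fun ω => g k ω i) | MeasurableSpace.comap (w k) inferInstance]
      =ᵐ[P] fun ω => (Exx *ᵥ w k ω - Exy) i)
    (hcov : ∀ k i j,
      P[(fun ω => (g k ω i - (Exx *ᵥ w k ω - Exy) i) * (g k ω j - (Exx *ᵥ w k ω - Exy) j)) |
          MeasurableSpace.comap (w k) inferInstance]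
        =ᵐ[P] fun _ => G i j)
    (hstep : ∀ k ω, w (k + 1) ω =
      if J (w k ω - ε • g k ω) - J (w k ω) ≤ -lam then w k ω - ε • g k ω else w k ω)
    (hherm : Exx.IsHermitian)
    (ρ : ℝ)
    (hρ : ρ = Finset.univ.sup' Finset.univ_nonempty
      fun i => (1 - ε * hherm.eigenvalues i) ^ 2)
    (hρ1 : ρ < 1) :
    ∀ N, ∫ ω, J (w N ω) ∂P
      ≤ ρ ^ N * J w0
        + (1 - ρ ^ N) * (J wstar + (lam + ε ^ 2 * (Sx * G).trace) / (1 - ρ)) := by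
  have hquadi := quad_identity μ hxx hxy hyy J hJ Exx hExx Exy hExy wstar hws hherm
  have heig : ∀ i, 0 < hherm.eigenvalues i := by
    intro i
    have hle : (1 - ε * hherm.eigenvalues i)^2 ≤ ρ := by
      rw [hρ]
      exact Finset.le_sup' (fun i => (1 - ε * hherm.eigenvalues i)^2) (Finset.mem_univ i)
    by_contra hcon
    push_neg at hcon
    nlinarith [hle, hρ1, mul_nonneg hε.le (neg_nonneg.2 hcon)]
  have hρ0 : 0 ≤ ρ := by
    have i0 : Fin n := ⟨0, Nat.pos_of_ne_zero (NeZero.ne n)⟩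
    have h := Finset.le_sup' (fun i => (1 - ε * hherm.eigenvalues i)^2) (Finset.mem_univ i0)
    rw [hρ]
    exact le_trans (sq_nonneg _) h
  have hne : 1 - ρ ≠ 0 := by linarith
  have hlmin : ∀ i, Finset.univ.inf' Finset.univ_nonempty hherm.eigenvalues
      ≤ hherm.eigenvalues i := fun i => Finset.inf'_le _ (Finset.mem_univ i)
  have hlmin0 : 0 < Finset.univ.inf' Finset.univ_nonempty hherm.eigenvalues := by
    rw [Finset.lt_inf'_iff]
    exact fun i _ => heig i
  have hsym : ∀ i j, Exx j i = Exx i j := by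
    intro i j
    have h := hherm.apply i j
    simpa using h
  have trace_eq : (Sx * G).trace = (1/2) * ∑ i, ∑ j, Exx i j * G i j := by
    rw [hSx, Matrix.smul_mul, Matrix.trace_smul]
    have h1 : (Exx * G).trace = ∑ i, ∑ j, Exx i j * G j i := by
      simp [Matrix.trace, Matrix.mul_apply, Matrix.diag]
    rw [h1]
    have h2 : ∑ i, ∑ j, Exx i j * G j i = ∑ i, ∑ j, Exx i j * G i j := by
      rw [Finset.sum_comm]
      exact Finset.sum_congr rfl fun i _ => Finset.sum_congr rfl fun j _ => by
        rw [hsym i j]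
    rw [h2]
    simp [smul_eq_mul]
  have base : ∫ ω, J (w 0 ω) ∂P = J w0 := by
    simp only [hw0]
    simp
  have step : ∀ k, ∫ ω, J (w (k+1) ω) ∂P
      ≤ ρ * ∫ ω, J (w k ω) ∂P + (1 - ρ) * J wstar + lam + ε^2 * (Sx * G).trace := by
    intro k
    have hpt : ∀ ω, J (w (k+1) ω) ≤ J (w k ω - ε • g k ω) + lam := by
      intro ω
      rw [hstep k ω]
      by_cases h : J (w k ω - ε • g k ω) - J (w k ω) ≤ -lam
      · rw [if_pos h]
        linarith [hlam]
      · rw [if_neg h]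
        push_neg at h
        linarith
    have h1 : ∫ ω, J (w (k+1) ω) ∂P ≤ ∫ ω, (J (w k ω - ε • g k ω) + lam) ∂P :=
      integral_mono (hJw (k+1)) ((hJwg k).add (integrable_const _)) hpt
    have h2 : ∫ ω, (J (w k ω - ε • g k ω) + lam) ∂P
        = ∫ ω, J (w k ω - ε • g k ω) ∂P + lam := by
      rw [integral_add (hJwg k) (integrable_const _), integral_const]
      simp
    have h3 := step_aux P Exx Exy G wstar hws J hquadi hherm ε ρ
      (Finset.univ.inf' Finset.univ_nonempty hherm.eigenvalues)
      (fun i => (heig i).le) hlmin hlmin0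
      (fun i => by
        rw [hρ]
        exact Finset.le_sup' (fun i => (1 - ε * hherm.eigenvalues i)^2) (Finset.mem_univ i))
      (w k) (g k) (hwmeas k) (hgi k) (hgij k) (hwgi k) (hJw k) (hJwg k) (hmean k) (hcov k)
    rw [trace_eq]
    linarith
  intro N
  induction N with
  | zero =>
    rw [base]
    simp
  | succ k ih =>
    have hC : (1 - ρ) * (J wstar + (lam + ε^2 * (Sx * G).trace)/(1-ρ))
        = (1-ρ) * J wstar + (lam + ε^2 * (Sx * G).trace) := by
      field_simp
    calc ∫ ω, J (w (k+1) ω) ∂P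
        ≤ ρ * ∫ ω, J (w k ω) ∂P + (1 - ρ) * J wstar + lam + ε^2 * (Sx * G).trace := step k
      _ ≤ ρ * (ρ^k * J w0 + (1 - ρ^k) * (J wstar + (lam + ε^2 * (Sx * G).trace)/(1-ρ)))
            + (1 - ρ) * J wstar + lam + ε^2 * (Sx * G).trace := by
          have := mul_le_mul_of_nonneg_left ih hρ0
          linarith
      _ = ρ^(k+1) * J w0 + (1 - ρ^(k+1))
            * (J wstar + (lam + ε^2 * (Sx * G).trace)/(1-ρ)) := by
          rw [pow_succ]
          linear_combination -hC
end

section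
/- (Theorem 2, Communication guarantee.) Consider any sequence of random iterates w_k and random directions g_k on a probability space with J(w_k) integrable, scheduled by the rule α_k = 1 if J(w_k - εg_k) - J(w_k) ≤ -λ and α_k = 0 otherwise, with w_{k+1} = w_k - εg_k if α_k = 1 and w_{k+1} = w_k otherwise, where λ > 0, ε > 0 and w_0 is deterministic. Then the total expected communication rate satisfies limsup_{N→∞} Σ_{k=0}^{N} E[α_k] ≤ (J(w_0) - J(w*)) / λ. -/
open MeasureTheory Matrix

theorem stmt12 {n : ℕ} (μ : Measure ((Fin n → ℝ) × ℝ)) [IsProbabilityMeasure μ]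
    (hxx : ∀ i j : Fin n, Integrable (fun p => p.1 i * p.1 j) μ)
    (hxy : ∀ i : Fin n, Integrable (fun p => p.1 i * p.2) μ)
    (hyy : Integrable (fun p => p.2 ^ 2) μ)
    (J : (Fin n → ℝ) → ℝ)
    (hJ : ∀ w : Fin n → ℝ, J w = (1 / 2) * ∫ p, (p.2 - p.1 ⬝ᵥ w) ^ 2 ∂μ)
    (Exx : Matrix (Fin n) (Fin n) ℝ)
    (hExx : ∀ i j, Exx i j = ∫ p, p.1 i * p.1 j ∂μ)
    (Exy : Fin n → ℝ)
    (hExy : ∀ i, Exy i = ∫ p, p.1 i * p.2 ∂μ)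
    (wstar : Fin n → ℝ) (hws : Exx *ᵥ wstar = Exy)
    {Ω : Type*} [MeasurableSpace Ω] (P : Measure Ω) [IsProbabilityMeasure P]
    (lam ε : ℝ) (hlam : 0 < lam) (hε : 0 < ε)
    (w g : ℕ → Ω → Fin n → ℝ)
    (w0 : Fin n → ℝ) (hw0 : ∀ ω, w 0 ω = w0)
    (α : ℕ → Ω → ℝ)
    (hα : ∀ k ω, α k ω =
      if J (w k ω - ε • g k ω) - J (w k ω) ≤ -lam then (1 : ℝ) else 0)
    (hαint : ∀ k, Integrable (α k) P)
    (hJint : ∀ k, Integrable (fun ω => J (w k ω)) P)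
    (hstep : ∀ k ω, w (k + 1) ω =
      if J (w k ω - ε • g k ω) - J (w k ω) ≤ -lam then w k ω - ε • g k ω else w k ω) :
    Filter.limsup (fun N => ∑ k ∈ Finset.range (N + 1), ∫ ω, α k ω ∂P) Filter.atTop
      ≤ (J w0 - J wstar) / lam := by
  -- integrand expansion lemma
  have hintA : ∀ u v : Fin n → ℝ,
      (fun p : (Fin n → ℝ) × ℝ => (p.1 ⬝ᵥ u) * (p.1 ⬝ᵥ v))
        = fun p => ∑ i, ∑ j, (u i * v j) * (p.1 i * p.1 j) := by
    intro u v
    funext p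
    simp only [dotProduct, Finset.sum_mul_sum]
    refine Finset.sum_congr rfl fun i _ => Finset.sum_congr rfl fun j _ => by ring
  have hintAI : ∀ u v : Fin n → ℝ,
      Integrable (fun p : (Fin n → ℝ) × ℝ => (p.1 ⬝ᵥ u) * (p.1 ⬝ᵥ v)) μ := by
    intro u v
    rw [hintA]
    exact integrable_finset_sum _ fun i _ =>
      integrable_finset_sum _ fun j _ => (hxx i j).const_mul _
  have hintAV : ∀ u v : Fin n → ℝ,
      ∫ p, (p.1 ⬝ᵥ u) * (p.1 ⬝ᵥ v) ∂μ = u ⬝ᵥ (Exx *ᵥ v) := by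
    intro u v
    rw [hintA, integral_finset_sum _ (fun i _ =>
      integrable_finset_sum _ fun j _ => (hxx i j).const_mul _)]
    have hin : ∀ i : Fin n, ∫ p : (Fin n → ℝ) × ℝ, ∑ j, u i * v j * (p.1 i * p.1 j) ∂μ
        = ∑ j, u i * v j * Exx i j := by
      intro i
      rw [integral_finset_sum _ fun j _ => (hxx i j).const_mul _]
      exact Finset.sum_congr rfl fun j _ => by rw [integral_const_mul, hExx]
    simp only [hin, dotProduct, mulVec, Finset.mul_sum]
    refine Finset.sum_congr rfl fun i _ => Finset.sum_congr rfl fun j _ => by ring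
  have hintB : ∀ u : Fin n → ℝ,
      (fun p : (Fin n → ℝ) × ℝ => (p.1 ⬝ᵥ u) * p.2)
        = fun p => ∑ i, u i * (p.1 i * p.2) := by
    intro u
    funext p
    simp only [dotProduct, Finset.sum_mul]
    exact Finset.sum_congr rfl fun i _ => by ring
  have hintBI : ∀ u : Fin n → ℝ,
      Integrable (fun p : (Fin n → ℝ) × ℝ => (p.1 ⬝ᵥ u) * p.2) μ := by
    intro u
    rw [hintB]
    exact integrable_finset_sum _ fun i _ => (hxy i).const_mul _
  have hintBV : ∀ u : Fin n → ℝ,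
      ∫ p, (p.1 ⬝ᵥ u) * p.2 ∂μ = u ⬝ᵥ Exy := by
    intro u
    rw [hintB, integral_finset_sum _ (fun i _ => (hxy i).const_mul _)]
    simp only [integral_const_mul, dotProduct]
    exact Finset.sum_congr rfl fun i _ => by rw [hExy]
  -- quadratic form value of J
  have hJval : ∀ v : Fin n → ℝ,
      J v = (1/2) * ((∫ p, p.2 ^ 2 ∂μ) - 2 * (v ⬝ᵥ Exy) + v ⬝ᵥ (Exx *ᵥ v)) := by
    intro v
    rw [hJ]
    congr 1
    have hexp : (fun p : (Fin n → ℝ) × ℝ => (p.2 - p.1 ⬝ᵥ v) ^ 2)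
        = fun p => p.2 ^ 2 - 2 * ((p.1 ⬝ᵥ v) * p.2) + (p.1 ⬝ᵥ v) * (p.1 ⬝ᵥ v) := by
      funext p; ring
    rw [hexp, integral_add (by exact (hyy.sub ((hintBI v).const_mul 2))) (hintAI v v),
      integral_sub hyy ((hintBI v).const_mul 2), integral_const_mul, hintBV, hintAV]
  -- symmetry of the quadratic form
  have hsymm : ∀ a b : Fin n → ℝ, a ⬝ᵥ (Exx *ᵥ b) = b ⬝ᵥ (Exx *ᵥ a) := by
    intro a b
    rw [← hintAV a b, ← hintAV b a]
    exact integral_congr_ae (Filter.Eventually.of_forall fun p => mul_comm _ _)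
  -- nonnegativity of the quadratic form
  have hpos : ∀ a : Fin n → ℝ, 0 ≤ a ⬝ᵥ (Exx *ᵥ a) := by
    intro a
    rw [← hintAV a a]
    exact integral_nonneg fun p => mul_self_nonneg _
  -- J wstar is the minimum
  have hmin : ∀ v : Fin n → ℝ, J wstar ≤ J v := by
    intro v
    have h1 := hpos (v - wstar)
    have h2 : (v - wstar) ⬝ᵥ (Exx *ᵥ (v - wstar))
        = v ⬝ᵥ (Exx *ᵥ v) - 2 * (v ⬝ᵥ (Exx *ᵥ wstar)) + wstar ⬝ᵥ (Exx *ᵥ wstar) := by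
      have e1 : Exx *ᵥ (v - wstar) = Exx *ᵥ v - Exx *ᵥ wstar := by
        rw [Matrix.mulVec_sub]
      rw [e1, sub_dotProduct, dotProduct_sub, dotProduct_sub, hsymm wstar v]
      ring
    have h3 : v ⬝ᵥ Exy = v ⬝ᵥ (Exx *ᵥ wstar) := by rw [hws]
    have h4 : wstar ⬝ᵥ Exy = wstar ⬝ᵥ (Exx *ᵥ wstar) := by rw [hws]
    rw [hJval v, hJval wstar]
    nlinarith [h1, h2]
  -- pointwise descent inequality
  have hdesc : ∀ (k : ℕ) (ω : Ω), lam * α k ω ≤ J (w k ω) - J (w (k+1) ω) := by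
    intro k ω
    rw [hα, hstep]
    by_cases h : J (w k ω - ε • g k ω) - J (w k ω) ≤ -lam
    · simp only [h, if_true]; linarith
    · simp only [h, if_false]; simp
  -- telescoped inequality
  have hsum : ∀ (N : ℕ) (ω : Ω),
      lam * ∑ k ∈ Finset.range (N + 1), α k ω ≤ J w0 - J (w (N+1) ω) := by
    intro N ω
    induction N with
    | zero =>
        simpa [hw0 ω] using hdesc 0 ω
    | succ N ih =>
        have := hdesc (N+1) ω
        rw [Finset.sum_range_succ, mul_add]
        linarith
  have hbound : ∀ N : ℕ,
      ∑ k ∈ Finset.range (N + 1), ∫ ω, α k ω ∂P ≤ (J w0 - J wstar) / lam := by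
    intro N
    have hintsum : Integrable (fun ω => lam * ∑ k ∈ Finset.range (N + 1), α k ω) P :=
      (integrable_finset_sum _ fun k _ => hαint k).const_mul _
    have hmono : ∫ ω, lam * ∑ k ∈ Finset.range (N + 1), α k ω ∂P
        ≤ ∫ (_ : Ω), J w0 - J wstar ∂P := by
      refine integral_mono hintsum (integrable_const _) fun ω => ?_
      have := hsum N ω
      have := hmin (w (N+1) ω)
      linarith
    rw [integral_const] at hmono
    simp only [probReal_univ, one_smul] at hmono
    rw [integral_const_mul, integral_finset_sum _ (fun k _ => hαint k)] at hmono
    rw [le_div_iff₀ hlam]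
    linarith [hmono]
  refine Filter.limsup_le_of_le ?_ (Filter.Eventually.of_forall hbound)
  refine Filter.IsBoundedUnder.isCoboundedUnder_le ?_
  refine Filter.isBoundedUnder_of ⟨0, fun N => ?_⟩
  exact Finset.sum_nonneg fun k _ => integral_nonneg fun ω => by
    rw [hα]; positivity
end
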